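/- arXiv:1909.11815 — 7 statements merged into one kernel-verified Lean document; each statement's English description precedes it below -/
import Mathlib

section
/- Let κ : X × X → ℂ be a bounded Borel kernel that is G-equivariant, i.e. κ(g·x, g·x') = κ(x,x') for all g ∈ G and x,x' ∈ X, and has propagation at most r, i.e. κ(x,x') = 0 whenever d(x,x') > r. Then for all x, x' ∈ X the function g ↦ κ(g⁻¹·x, x') is Borel, bounded, and supported in a compact subset of G, so that Av(κ)(x,x') := ∫_G κ(g⁻¹·x, x') dg is a well-defined (convergent) integral; moreover (i) Av(κ)(g·x, g'·x') = Av(κ)(x,x') for all g, g' ∈ G and all x, x' ∈ X, and (ii) Av(κ)(x,x') = 0 whenever inf_{g ∈ G} d(g·x, x') > r. -/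
open MeasureTheory
set_option maxHeartbeats 1000000 in

/-- For a bounded Borel `G`-equivariant kernel `κ` of propagation at most
`r`, the function `g ↦ κ(g⁻¹ • x, x')` is Borel, bounded and compactly supported (hence
integrable), so the averaged kernel `Av(κ)(x,x') = ∫_G κ(g⁻¹ • x, x') dg` is well defined;
moreover `Av(κ)` is `G × G`-invariant and vanishes when the distance between the orbits
`G·x` and `G·x'` exceeds `r`. -/
theorem averaged_kernel_wellDefined
    {G X : Type*}
    [Group G] [TopologicalSpace G] [IsTopologicalGroup G] [LocallyCompactSpace G] [T2Space G]
    [MeasurableSpace G] [BorelSpace G]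
    (μG : Measure G) [μG.IsHaarMeasure] [μG.IsMulRightInvariant] [μG.IsInvInvariant]
    [MetricSpace X] [ProperSpace X] [MeasurableSpace X] [BorelSpace X]
    [MulAction G X] [ContinuousSMul G X]
    (hiso : ∀ (g : G) (x y : X), dist (g • x) (g • y) = dist x y)
    (hproper : IsProperMap fun p : G × X => (p.1 • p.2, p.2))
    (κ : X × X → ℂ) (r : ℝ)
    (hκ_meas : Measurable κ)
    (hκ_bdd : ∃ C, ∀ p, ‖κ p‖ ≤ C)
    (hκ_equiv : ∀ (g : G) (x x' : X), κ (g • x, g • x') = κ (x, x'))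
    (hκ_prop : ∀ x x' : X, r < dist x x' → κ (x, x') = 0) :
    (∀ x x' : X, Measurable fun g : G => κ (g⁻¹ • x, x')) ∧
    (∀ x x' : X, ∃ C, ∀ g : G, ‖κ (g⁻¹ • x, x')‖ ≤ C) ∧
    (∀ x x' : X, ∃ K : Set G, IsCompact K ∧ ∀ g ∉ K, κ (g⁻¹ • x, x') = 0) ∧
    (∀ x x' : X, Integrable (fun g : G => κ (g⁻¹ • x, x')) μG) ∧
    (∀ (g g' : G) (x x' : X),
      ∫ h : G, κ (h⁻¹ • (g • x), g' • x') ∂μG = ∫ h : G, κ (h⁻¹ • x, x') ∂μG) ∧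
    (∀ x x' : X, (r < ⨅ g : G, dist (g • x) x') →
      ∫ h : G, κ (h⁻¹ • x, x') ∂μG = 0) := by
  obtain ⟨C, hC⟩ := hκ_bdd
  have hmeas : ∀ x x' : X, Measurable fun g : G => κ (g⁻¹ • x, x') := fun x x' =>
    hκ_meas.comp (((continuous_inv.smul continuous_const).prodMk continuous_const).measurable)
  have hsupp : ∀ x x' : X, ∃ K : Set G, IsCompact K ∧ ∀ g ∉ K, κ (g⁻¹ • x, x') = 0 := by
    intro x x'
    have hP : IsCompact ((fun p : G × X => (p.1 • p.2, p.2)) ⁻¹'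
        (Metric.closedBall x' r ×ˢ {x})) :=
      hproper.isCompact_preimage ((isCompact_closedBall x' r).prod isCompact_singleton)
    refine ⟨(Prod.fst '' ((fun p : G × X => (p.1 • p.2, p.2)) ⁻¹'
        (Metric.closedBall x' r ×ˢ {x})))⁻¹, (hP.image continuous_fst).inv, ?_⟩
    intro g hg
    by_contra h
    apply hg
    have hd : dist (g⁻¹ • x) x' ≤ r := by
      by_contra hd
      exact h (hκ_prop _ _ (lt_of_not_ge hd))
    exact Set.mem_inv.mpr ⟨(g⁻¹, x), ⟨Metric.mem_closedBall.mpr hd, rfl⟩, rfl⟩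
  have hint : ∀ x x' : X, Integrable (fun g : G => κ (g⁻¹ • x, x')) μG := by
    intro x x'
    obtain ⟨K, hK, hK0⟩ := hsupp x x'
    have hsub : Function.support (fun g : G => κ (g⁻¹ • x, x')) ⊆ K := by
      intro g hg
      by_contra h
      exact hg (hK0 g h)
    rw [← integrableOn_iff_integrable_of_support_subset hsub]
    exact Measure.integrableOn_of_bounded hK.measure_lt_top.ne
      (hmeas x x').aestronglyMeasurable (ae_of_all _ fun g => hC _)
  have hinv : ∀ (g g' : G) (x x' : X),
      ∫ h : G, κ (h⁻¹ • (g • x), g' • x') ∂μG = ∫ h : G, κ (h⁻¹ • x, x') ∂μG := by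
    intro g g' x x'
    have h1 : ∀ h : G, κ (h⁻¹ • (g • x), g' • x') =
        (fun k : G => κ (k⁻¹ • x, x')) (g⁻¹ * (h * g')) := by
      intro h
      have h2 := hκ_equiv g'⁻¹ (h⁻¹ • (g • x)) (g' • x')
      rw [inv_smul_smul] at h2
      rw [← h2]
      simp only [smul_smul, mul_inv_rev, inv_inv]
      congr 1
      group
    simp_rw [h1]
    rw [show (fun h : G => (fun k : G => κ (k⁻¹ • x, x')) (g⁻¹ * (h * g'))) =
        (fun h : G => (fun k : G => κ ((g⁻¹ * k)⁻¹ • x, x')) (h * g')) from rfl]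
    rw [integral_mul_right_eq_self (fun k : G => κ ((g⁻¹ * k)⁻¹ • x, x')) g']
    exact integral_mul_left_eq_self (fun k : G => κ (k⁻¹ • x, x')) g⁻¹
  refine ⟨hmeas, fun x x' => ⟨C, fun g => hC _⟩, hsupp, hint, hinv, ?_⟩
  intro x x' hr
  have hz : ∀ h : G, κ (h⁻¹ • x, x') = 0 := by
    intro h
    apply hκ_prop
    calc r < ⨅ g : G, dist (g • x) x' := hr
      _ ≤ dist (h⁻¹ • x) x' :=
        ciInf_le ⟨0, by rintro d ⟨g, rfl⟩; exact dist_nonneg⟩ h⁻¹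
  simp [hz]
end

section
/- Let κ, κ' : X × X → ℂ be bounded Borel G-equivariant kernels of propagation at most r and r' respectively, and define their composition by (κ ⋆ κ')(x,x') := ∫_X κ(x,y) κ'(y,x') dμ(y); for each fixed x, x' the integrand is bounded, Borel, and supported in the compact closed ball of radius r around x, hence μ-integrable. Then for all x, x' ∈ X, Av(κ ⋆ κ')(x,x') = ∫_{X/G} Av(κ)(x, s₀(ω)) · Av(κ')(s₀(ω), x') dν(ω). In other words, the averaging map Av is multiplicative with respect to composition of kernels on X and composition of kernels over the orbit space X/G. -/
open MeasureTheory

/-- A bounded measurable function vanishing off a set of finite measure is integrable. -/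
lemma aux_integrable_of_bounded_of_support {α : Type*} [MeasurableSpace α]
    {μ : Measure α} {f : α → ℂ} {s : Set α} (hs : MeasurableSet s) (hμs : μ s < ⊤)
    (hf : Measurable f) (C : ℝ) (hC : ∀ a, ‖f a‖ ≤ C)
    (h0 : ∀ a ∉ s, f a = 0) : Integrable f μ := by
  have hfi : f = s.indicator f := by
    funext a
    by_cases ha : a ∈ s
    · simp [Set.indicator_of_mem ha]
    · simp [Set.indicator_of_notMem ha, h0 a ha]
  rw [hfi, integrable_indicator_iff hs]
  exact Integrable.mono' (integrableOn_const hμs.ne)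
    hf.aestronglyMeasurable.restrict (Filter.Eventually.of_forall hC)

/-- For bounded Borel `G`-equivariant kernels `κ, κ'` of finite
propagation, the composed kernel `(κ ⋆ κ')(x,x') = ∫_X κ(x,y) κ'(y,x') dμ(y)` is given by
a μ-integrable integrand, and the averaging map is multiplicative:
`Av(κ ⋆ κ')(x,x') = ∫_{X/G} Av(κ)(x, s₀(ω)) · Av(κ')(s₀(ω), x') dν(ω)`. -/
theorem averaged_kernel_multiplicative
    {G X : Type*}
    [Group G] [TopologicalSpace G] [IsTopologicalGroup G] [LocallyCompactSpace G] [T2Space G]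
    [MeasurableSpace G] [BorelSpace G]
    (μG : Measure G) [μG.IsHaarMeasure] [μG.IsMulRightInvariant] [μG.IsInvInvariant]
    [MetricSpace X] [ProperSpace X] [MeasurableSpace X] [BorelSpace X]
    [MulAction G X] [ContinuousSMul G X]
    (hiso : ∀ (g : G) (x y : X), dist (g • x) (g • y) = dist x y)
    (hproper : IsProperMap fun p : G × X => (p.1 • p.2, p.2))
    (μ : Measure X) [SMulInvariantMeasure G X μ] [IsLocallyFiniteMeasure μ]
    [MeasurableSpace (Quotient (MulAction.orbitRel G X))]
    (ν : Measure (Quotient (MulAction.orbitRel G X)))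
    (s₀ : Quotient (MulAction.orbitRel G X) → X)
    (hs₀_meas : Measurable s₀)
    (hs₀_sec : ∀ ω, Quotient.mk (MulAction.orbitRel G X) (s₀ ω) = ω)
    (hWeil : ∀ φ : X → ℂ, Integrable φ μ →
      ∫ x, φ x ∂μ = ∫ ω, ∫ g, φ (g • s₀ ω) ∂μG ∂ν)
    (κ κ' : X × X → ℂ) (r r' : ℝ)
    (hκ_meas : Measurable κ) (hκ'_meas : Measurable κ')
    (hκ_bdd : ∃ C, ∀ p, ‖κ p‖ ≤ C) (hκ'_bdd : ∃ C, ∀ p, ‖κ' p‖ ≤ C)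
    (hκ_equiv : ∀ (g : G) (x x' : X), κ (g • x, g • x') = κ (x, x'))
    (hκ'_equiv : ∀ (g : G) (x x' : X), κ' (g • x, g • x') = κ' (x, x'))
    (hκ_prop : ∀ x x' : X, r < dist x x' → κ (x, x') = 0)
    (hκ'_prop : ∀ x x' : X, r' < dist x x' → κ' (x, x') = 0) :
    (∀ x x' : X, (∀ y : X, y ∉ Metric.closedBall x r → κ (x, y) * κ' (y, x') = 0) ∧
      Integrable (fun y : X => κ (x, y) * κ' (y, x')) μ) ∧
    (∀ x x' : X,
      ∫ g : G, (∫ y : X, κ (g⁻¹ • x, y) * κ' (y, x') ∂μ) ∂μG =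
        ∫ ω, (∫ g : G, κ (g⁻¹ • x, s₀ ω) ∂μG) *
          (∫ g : G, κ' (g⁻¹ • s₀ ω, x') ∂μG) ∂ν) := by
  obtain ⟨C, hC⟩ := hκ_bdd
  obtain ⟨C', hC'⟩ := hκ'_bdd
  -- basic measurability facts
  have hκy : ∀ z : X, Measurable fun y : X => κ (z, y) :=
    fun z => hκ_meas.comp (measurable_const.prodMk measurable_id)
  have hκ'y : ∀ z : X, Measurable fun y : X => κ' (y, z) :=
    fun z => hκ'_meas.comp (measurable_id.prodMk measurable_const)
  constructor
  · -- first conjunct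
    intro x x'
    have hC0 : (0:ℝ) ≤ C := le_trans (norm_nonneg _) (hC (x, x))
    have h0 : ∀ y : X, y ∉ Metric.closedBall x r → κ (x, y) * κ' (y, x') = 0 := by
      intro y hy
      have : r < dist x y := by
        rw [dist_comm]
        simpa [Metric.mem_closedBall, not_le] using hy
      rw [hκ_prop x y this, zero_mul]
    refine ⟨h0, ?_⟩
    exact aux_integrable_of_bounded_of_support (measurableSet_closedBall)
      (isCompact_closedBall x r).measure_lt_top
      ((hκy x).mul (hκ'y x')) (C * C')
      (fun y => by
        calc ‖κ (x, y) * κ' (y, x')‖ = ‖κ (x, y)‖ * ‖κ' (y, x')‖ := norm_mul _ _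
        _ ≤ C * C' := mul_le_mul (hC _) (hC' _) (norm_nonneg _) hC0)
      h0
  · -- second conjunct
    intro x x'
    set B' : Set X := Metric.closedBall x' r' with hB'
    have hB'meas : MeasurableSet B' := measurableSet_closedBall
    have hB'fin : μ B' < ⊤ := (isCompact_closedBall x' r').measure_lt_top
    -- κ'(y, x') vanishes off B'
    have hκ'0 : ∀ y : X, y ∉ B' → κ' (y, x') = 0 := by
      intro y hy
      exact hκ'_prop y x' (by simpa [hB', Metric.mem_closedBall, not_le] using hy)
    -- the compact set of relevant group elements
    set Kset : Set G := {g : G | g • x' ∈ Metric.closedBall x (r + r')} with hKdef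
    have hK_compact : IsCompact Kset := by
      have hcpt : IsCompact ((fun p : G × X => (p.1 • p.2, p.2)) ⁻¹'
          (Metric.closedBall x (r + r') ×ˢ {x'})) :=
        hproper.isCompact_preimage ((isCompact_closedBall x (r + r')).prod isCompact_singleton)
      have himg : Kset = Prod.fst '' ((fun p : G × X => (p.1 • p.2, p.2)) ⁻¹'
          (Metric.closedBall x (r + r') ×ˢ {x'})) := by
        ext g
        constructor
        · intro hg
          exact ⟨(g, x'), ⟨hg, rfl⟩, rfl⟩
        · rintro ⟨⟨g', y⟩, ⟨h1, h2⟩, rfl⟩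
          simp only [Set.mem_singleton_iff] at h2
          subst h2
          exact h1
      rw [himg]
      exact hcpt.image continuous_fst
    have hKmeas : MeasurableSet Kset := hK_compact.isClosed.measurableSet
    have hKfin : μG Kset < ⊤ := hK_compact.measure_lt_top
    -- key support fact: for g ∉ Kset and y ∈ B', κ (g⁻¹ • x, y) = 0
    have hsupp : ∀ g : G, g ∉ Kset → ∀ y ∈ B', κ (g⁻¹ • x, y) = 0 := by
      intro g hg y hy
      have h1 : r + r' < dist (g • x') x := by
        simpa [hKdef, Metric.mem_closedBall, not_le] using hg
      have h2 : dist (g⁻¹ • x) x' = dist (g • x') x := by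
        have := hiso g (g⁻¹ • x) x'
        rw [smul_inv_smul] at this
        rw [← this, dist_comm]
      have h3 : dist y x' ≤ r' := by simpa [hB', Metric.mem_closedBall] using hy
      have h4 : dist (g⁻¹ • x) x' ≤ dist (g⁻¹ • x) y + dist y x' := dist_triangle _ _ _
      have : r < dist (g⁻¹ • x) y := by
        rw [h2] at h4
        linarith
      exact hκ_prop _ _ this
    -- measurability of the joint kernel
    have hcont : Continuous fun g : G => g⁻¹ • x := continuous_inv.smul continuous_const
    have hFmeas : Measurable fun p : G × X => κ (p.1⁻¹ • x, p.2) * κ' (p.2, x') := by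
      apply Measurable.mul
      · exact hκ_meas.comp (((hcont.measurable).comp measurable_fst).prodMk measurable_snd)
      · exact (hκ'y x').comp measurable_snd
    haveI : IsFiniteMeasure (μG.restrict Kset) :=
      ⟨by rwa [Measure.restrict_apply_univ]⟩
    haveI : IsFiniteMeasure (μ.restrict B') :=
      ⟨by rwa [Measure.restrict_apply_univ]⟩
    -- the averaged kernel A z = ∫ g, κ(g⁻¹ • x, z)
    set A : X → ℂ := fun z => ∫ g, κ (g⁻¹ • x, z) ∂μG with hA
    have hA_inv : ∀ (h : G) (z : X), A (h • z) = A z := by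
      intro h z
      have heq : ∀ g : G, κ (g⁻¹ • x, h • z) = κ ((g * h)⁻¹ • x, z) := by
        intro g
        rw [← hκ_equiv h⁻¹ (g⁻¹ • x) (h • z), inv_smul_smul, ← mul_smul, ← mul_inv_rev]
      calc A (h • z) = ∫ g, κ ((g * h)⁻¹ • x, z) ∂μG := by
            simp only [hA]; exact integral_congr_ae (Filter.Eventually.of_forall heq)
        _ = A z := integral_mul_right_eq_self (fun g => κ (g⁻¹ • x, z)) h
    -- ψ : the truncated averaged first factor times κ'
    set ψ : X → ℂ := fun y => (∫ g in Kset, κ (g⁻¹ • x, y) ∂μG) * κ' (y, x') with hψ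
    -- ψ is measurable
    have hψ_meas : Measurable ψ := by
      have hsm : StronglyMeasurable fun p : X × G => κ (p.2⁻¹ • x, p.1) :=
        (hκ_meas.comp ((hcont.measurable.comp measurable_snd).prodMk
          measurable_fst)).stronglyMeasurable
      have := (hsm.integral_prod_right' (ν := μG.restrict Kset)).measurable
      exact this.mul (hκ'y x')
    -- ψ is bounded
    have hψ_bdd : ∀ y : X, ‖ψ y‖ ≤ (C * (μG Kset).toReal) * C' := by
      intro y
      have hC0 : (0:ℝ) ≤ C := le_trans (norm_nonneg _) (hC (x, x))
      have h1 : ‖∫ g in Kset, κ (g⁻¹ • x, y) ∂μG‖ ≤ C * ((μG.restrict Kset) Set.univ).toReal := by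
        apply norm_integral_le_of_norm_le_const (Filter.Eventually.of_forall fun g => hC _)
      rw [Measure.restrict_apply_univ] at h1
      calc ‖ψ y‖ = ‖∫ g in Kset, κ (g⁻¹ • x, y) ∂μG‖ * ‖κ' (y, x')‖ := norm_mul _ _
        _ ≤ (C * (μG Kset).toReal) * C' :=
          mul_le_mul h1 (hC' _) (norm_nonneg _)
            (mul_nonneg hC0 ENNReal.toReal_nonneg)
    -- ψ vanishes off B'
    have hψ0 : ∀ y : X, y ∉ B' → ψ y = 0 := fun y hy => by
      simp [hψ, hκ'0 y hy]
    have hψ_int : Integrable ψ μ :=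
      aux_integrable_of_bounded_of_support hB'meas hB'fin hψ_meas _ hψ_bdd hψ0
    -- Main chain of equalities
    -- Step 1: the g-integral localizes to Kset
    have hIzero : ∀ g : G, g ∉ Kset → (∫ y : X, κ (g⁻¹ • x, y) * κ' (y, x') ∂μ) = 0 := by
      intro g hg
      have : ∀ y : X, κ (g⁻¹ • x, y) * κ' (y, x') = 0 := by
        intro y
        by_cases hy : y ∈ B'
        · rw [hsupp g hg y hy, zero_mul]
        · rw [hκ'0 y hy, mul_zero]
      simp [this]
    have step1 : ∫ g : G, (∫ y : X, κ (g⁻¹ • x, y) * κ' (y, x') ∂μ) ∂μG =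
        ∫ g in Kset, (∫ y : X, κ (g⁻¹ • x, y) * κ' (y, x') ∂μ) ∂μG :=
      (setIntegral_eq_integral_of_forall_compl_eq_zero hIzero).symm
    -- Step 2: each inner integral localizes to B'
    have step2 : ∫ g in Kset, (∫ y : X, κ (g⁻¹ • x, y) * κ' (y, x') ∂μ) ∂μG =
        ∫ g in Kset, (∫ y in B', κ (g⁻¹ • x, y) * κ' (y, x') ∂μ) ∂μG := by
      apply integral_congr_ae
      apply Filter.Eventually.of_forall
      intro g
      exact (setIntegral_eq_integral_of_forall_compl_eq_zero fun y hy => by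
        rw [hκ'0 y hy, mul_zero]).symm
    -- Step 3: Fubini on the finite product measure
    have hint_prod : Integrable (fun p : G × X => κ (p.1⁻¹ • x, p.2) * κ' (p.2, x'))
        ((μG.restrict Kset).prod (μ.restrict B')) := by
      have hC0 : (0:ℝ) ≤ C := le_trans (norm_nonneg _) (hC (x, x))
      refine ⟨hFmeas.aestronglyMeasurable, ?_⟩
      apply HasFiniteIntegral.of_bounded (C := C * C')
      apply Filter.Eventually.of_forall
      intro p
      calc ‖κ (p.1⁻¹ • x, p.2) * κ' (p.2, x')‖ = ‖κ (p.1⁻¹ • x, p.2)‖ * ‖κ' (p.2, x')‖ :=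
            norm_mul _ _
        _ ≤ C * C' := mul_le_mul (hC _) (hC' _) (norm_nonneg _) hC0
    have step3 : ∫ g in Kset, (∫ y in B', κ (g⁻¹ • x, y) * κ' (y, x') ∂μ) ∂μG =
        ∫ y in B', (∫ g in Kset, κ (g⁻¹ • x, y) * κ' (y, x') ∂μG) ∂μ :=
      integral_integral_swap hint_prod
    -- Step 4: pull out the κ' factor and extend the g-integral back to G, getting ψ
    have step4 : ∫ y in B', (∫ g in Kset, κ (g⁻¹ • x, y) * κ' (y, x') ∂μG) ∂μ =
        ∫ y in B', ψ y ∂μ := by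
      apply integral_congr_ae
      apply Filter.Eventually.of_forall
      intro y
      simp only [hψ]
      exact integral_mul_const (κ' (y, x')) _
    -- Step 5: extend the y-integral to all of X
    have step5 : ∫ y in B', ψ y ∂μ = ∫ y, ψ y ∂μ :=
      setIntegral_eq_integral_of_forall_compl_eq_zero hψ0
    -- Step 6: Weil's formula
    have step6 : ∫ y, ψ y ∂μ = ∫ ω, ∫ h, ψ (h • s₀ ω) ∂μG ∂ν := hWeil ψ hψ_int
    -- Step 7: identify the inner integral with the product of averages
    have key : ∀ y : X, ψ y = A y * κ' (y, x') := by
      intro y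
      by_cases hy : y ∈ B'
      · simp only [hψ, hA]
        congr 1
        exact setIntegral_eq_integral_of_forall_compl_eq_zero fun g hg => hsupp g hg y hy
      · rw [hψ0 y hy, hκ'0 y hy, mul_zero]
    have step7 : ∀ ω, ∫ h, ψ (h • s₀ ω) ∂μG =
        A (s₀ ω) * ∫ g : G, κ' (g⁻¹ • s₀ ω, x') ∂μG := by
      intro ω
      have h1 : ∀ h : G, ψ (h • s₀ ω) = A (s₀ ω) * κ' (h • s₀ ω, x') := by
        intro h
        rw [key (h • s₀ ω), hA_inv h (s₀ ω)]
      calc ∫ h, ψ (h • s₀ ω) ∂μG = ∫ h, A (s₀ ω) * κ' (h • s₀ ω, x') ∂μG :=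
            integral_congr_ae (Filter.Eventually.of_forall h1)
        _ = A (s₀ ω) * ∫ h, κ' (h • s₀ ω, x') ∂μG := integral_const_mul _ _
        _ = A (s₀ ω) * ∫ g : G, κ' (g⁻¹ • s₀ ω, x') ∂μG := by
            congr 1
            have := integral_inv_eq_self (fun h : G => κ' (h⁻¹ • s₀ ω, x')) μG
            simp only [inv_inv] at this
            exact this
    calc ∫ g : G, (∫ y : X, κ (g⁻¹ • x, y) * κ' (y, x') ∂μ) ∂μG
        = ∫ y, ψ y ∂μ := by rw [step1, step2, step3, step4, step5]
      _ = ∫ ω, ∫ h, ψ (h • s₀ ω) ∂μG ∂ν := step6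
      _ = ∫ ω, (∫ g : G, κ (g⁻¹ • x, s₀ ω) ∂μG) *
          (∫ g : G, κ' (g⁻¹ • s₀ ω, x') ∂μG) ∂ν :=
            integral_congr_ae (Filter.Eventually.of_forall fun ω => step7 ω)
end

section
/- Let χ : X → [0,∞) be a bounded continuous function such that (a) for every x ∈ X the set {g ∈ G : χ(g·x) ≠ 0} is relatively compact in G, (b) ∫_G χ(g·x)² dg = 1 for every x ∈ X, and (c) d(x,x') ≤ d_G(x,x') + 1 for all x, x' in the support of χ. Let κ_G : X × X → ℂ be a bounded Borel function invariant under G × G, i.e. κ_G(g·x, g'·x') = κ_G(x,x') for all g, g' ∈ G, and satisfying κ_G(x,x') = 0 whenever d_G(x,x') > r. Define κ(x,x') := (∫_G χ(g·x)² χ(g·x')² dg) · κ_G(x,x'). Then κ is a bounded Borel kernel with: (i) κ(g·x, g·x') = κ(x,x') for all g ∈ G and x,x' ∈ X; (ii) κ(x,x') = 0 whenever d(x,x') > r + 1; (iii) ∫_G κ(g⁻¹·x, x') dg = κ_G(x,x') for all x, x' ∈ X, i.e. Av(κ) = κ_G. -/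
open MeasureTheory Pointwise

/-- Given a cutoff function `χ` whose support extends mainly
transversally to the orbits, and a `G × G`-invariant bounded Borel kernel `κ_G` on the
orbit space of propagation at most `r`, the kernel
`κ(x,x') = (∫_G χ(g•x)² χ(g•x')² dg) · κ_G(x,x')` is a bounded Borel kernel which is
invariant under the diagonal `G`-action, has propagation at most `r + 1`, and satisfies
`Av(κ) = κ_G`.  (This is the surjectivity part of Lemma 4.1 of the paper.) -/
theorem averaging_surjective_kernel
    {G X : Type*}
    [Group G] [TopologicalSpace G] [IsTopologicalGroup G] [LocallyCompactSpace G] [T2Space G]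
    [MeasurableSpace G] [BorelSpace G]
    (μG : Measure G) [μG.IsHaarMeasure] [μG.IsMulRightInvariant] [μG.IsInvInvariant]
    [MetricSpace X] [ProperSpace X] [MeasurableSpace X] [BorelSpace X]
    [MulAction G X] [ContinuousSMul G X]
    (hiso : ∀ (g : G) (x y : X), dist (g • x) (g • y) = dist x y)
    (hproper : IsProperMap fun p : G × X => (p.1 • p.2, p.2))
    (χ : X → ℝ) (hχ_cont : Continuous χ) (hχ_nonneg : ∀ x, 0 ≤ χ x)
    (hχ_bdd : ∃ C, ∀ x, χ x ≤ C)
    (hχ_cpt : ∀ x : X, IsCompact (closure {g : G | χ (g • x) ≠ 0}))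
    (hχ_int : ∀ x : X, ∫ g, (χ (g • x)) ^ 2 ∂μG = 1)
    (hχ_transv : ∀ x x' : X, χ x ≠ 0 → χ x' ≠ 0 →
      dist x x' ≤ (⨅ g : G, dist (g • x) x') + 1)
    (κG : X × X → ℂ) (r : ℝ)
    (hκG_meas : Measurable κG)
    (hκG_bdd : ∃ C, ∀ p, ‖κG p‖ ≤ C)
    (hκG_inv : ∀ (g g' : G) (x x' : X), κG (g • x, g' • x') = κG (x, x'))
    (hκG_prop : ∀ x x' : X, r < ⨅ g : G, dist (g • x) x' → κG (x, x') = 0)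
    (κ : X × X → ℂ)
    (hκ_def : ∀ x x' : X,
      κ (x, x') = ((∫ g, (χ (g • x)) ^ 2 * (χ (g • x')) ^ 2 ∂μG : ℝ) : ℂ) * κG (x, x')) :
    Measurable κ ∧ (∃ C, ∀ p, ‖κ p‖ ≤ C) ∧
    (∀ (g : G) (x x' : X), κ (g • x, g • x') = κ (x, x')) ∧
    (∀ x x' : X, r + 1 < dist x x' → κ (x, x') = 0) ∧
    (∀ x x' : X, ∫ g : G, κ (g⁻¹ • x, x') ∂μG = κG (x, x')) := by
  obtain ⟨C₀, hC₀⟩ := hχ_bdd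
  obtain ⟨Cκ, hCκ⟩ := hκG_bdd
  set C : ℝ := max C₀ 0 with hCdef
  have hCnn : (0 : ℝ) ≤ C := le_max_right _ _
  have hχC : ∀ y, χ y ≤ C := fun y => (hC₀ y).trans (le_max_left _ _)
  have hsq : ∀ y : X, χ y ^ 2 ≤ C ^ 2 := fun y => pow_le_pow_left₀ (hχ_nonneg y) (hχC y) 2
  have hcχ : ∀ x : X, Continuous fun g : G => χ (g • x) :=
    fun x => hχ_cont.comp (continuous_id.smul continuous_const)
  have hcont1 : ∀ x : X, Continuous fun g : G => χ (g • x) ^ 2 := fun x => (hcχ x).pow 2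
  have hsupp1 : ∀ x : X, HasCompactSupport fun g : G => χ (g • x) ^ 2 := by
    intro x
    have hs : (Function.support fun g : G => χ (g • x) ^ 2) = {g : G | χ (g • x) ≠ 0} := by
      ext g
      simp [Function.mem_support, pow_eq_zero_iff]
    rw [HasCompactSupport, tsupport, hs]
    exact hχ_cpt x
  have hint1 : ∀ x : X, Integrable (fun g : G => χ (g • x) ^ 2) μG :=
    fun x => (hcont1 x).integrable_of_hasCompactSupport (hsupp1 x)
  have hint2 : ∀ x x' : X, Integrable (fun g : G => χ (g • x) ^ 2 * χ (g • x') ^ 2) μG :=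
    fun x x' => ((hcont1 x).mul (hcont1 x')).integrable_of_hasCompactSupport
      ((hsupp1 x).mul_right)
  have hex : ∀ x : X, ∃ g : G, χ (g • x) ≠ 0 := by
    intro x
    by_contra h
    push_neg at h
    have h1 := hχ_int x
    have h0 : (fun g : G => χ (g • x) ^ 2) = fun _ => 0 := funext fun g => by rw [h g]; ring
    rw [h0, integral_zero] at h1
    exact absurd h1 (by norm_num)
  have hkey : ∀ (x₀ y : X) (g₀ g : G), χ (g₀ • x₀) ≠ 0 → χ (g • y) ≠ 0 →
      dist (g • y) (g₀ • x₀) ≤ dist y x₀ + 1 := by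
    intro x₀ y g₀ g h0 hg
    have h1 := hχ_transv (g • y) (g₀ • x₀) hg h0
    have hbdd : BddBelow (Set.range fun k : G => dist (k • (g • y)) (g₀ • x₀)) :=
      ⟨0, by rintro _ ⟨k, rfl⟩; exact dist_nonneg⟩
    have h2 : (⨅ k : G, dist (k • (g • y)) (g₀ • x₀)) ≤ dist y x₀ := by
      have e : (g₀ * g⁻¹) • (g • y) = g₀ • y := by
        rw [smul_smul, mul_assoc, inv_mul_cancel, mul_one]
      have h3 := ciInf_le hbdd (g₀ * g⁻¹)
      rwa [e, hiso g₀ y x₀] at h3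
    linarith
  have hIle : ∀ x x' : X, (∫ g, χ (g • x) ^ 2 * χ (g • x') ^ 2 ∂μG) ≤ C ^ 2 := by
    intro x x'
    have h1 : (∫ g, χ (g • x) ^ 2 * χ (g • x') ^ 2 ∂μG) ≤ ∫ g, χ (g • x) ^ 2 * C ^ 2 ∂μG := by
      refine integral_mono (hint2 x x') ((hint1 x).mul_const _) fun g => ?_
      exact mul_le_mul_of_nonneg_left (hsq _) (sq_nonneg _)
    rwa [integral_mul_const, hχ_int x, one_mul] at h1
  have hInn : ∀ x x' : X, 0 ≤ ∫ g, χ (g • x) ^ 2 * χ (g • x') ^ 2 ∂μG :=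
    fun x x' => integral_nonneg fun g => mul_nonneg (sq_nonneg _) (sq_nonneg _)
  rcases isEmpty_or_nonempty X with hX | hX
  · refine ⟨?_, ⟨0, fun p => (hX.false p.1).elim⟩,
      fun g x => (hX.false x).elim, fun x => (hX.false x).elim, fun x => (hX.false x).elim⟩
    haveI : Subsingleton (X × X) := ⟨fun a b => (hX.false a.1).elim⟩
    exact Subsingleton.measurable
  -- measurability via continuity of the cutoff overlap integral
  have hIcont : Continuous fun p : X × X => ∫ g, χ (g • p.1) ^ 2 * χ (g • p.2) ^ 2 ∂μG := by
    rw [continuous_iff_continuousAt]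
    rintro ⟨x₀, x₀'⟩
    obtain ⟨g₀, hg₀⟩ := hex x₀
    set T : Set G := Prod.fst '' ((fun p : G × X => (p.1 • p.2, p.2)) ⁻¹'
      (Metric.closedBall (g₀ • x₀) 2 ×ˢ Metric.closedBall x₀ 1)) with hT
    have hTcpt : IsCompact T :=
      (hproper.isCompact_preimage
        ((isCompact_closedBall _ _).prod (isCompact_closedBall _ _))).image continuous_fst
    have hTmem : ∀ (g : G) (y : X), y ∈ Metric.closedBall x₀ 1 → χ (g • y) ≠ 0 → g ∈ T := by
      intro g y hy hgy
      refine ⟨(g, y), Set.mem_preimage.2 (Set.mk_mem_prod ?_ hy), rfl⟩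
      have h1 := hkey x₀ y g₀ g hg₀ hgy
      have hy' : dist y x₀ ≤ 1 := Metric.mem_closedBall.1 hy
      exact Metric.mem_closedBall.2 (by linarith)
    refine continuousAt_of_dominated (bound := T.indicator fun _ => C ^ 2 * C ^ 2) ?_ ?_ ?_ ?_
    · exact Filter.Eventually.of_forall fun p =>
        ((hcont1 p.1).mul (hcont1 p.2)).aestronglyMeasurable
    · have hnb : Metric.closedBall x₀ 1 ×ˢ (Set.univ : Set X) ∈ nhds ((x₀, x₀') : X × X) :=
        prod_mem_nhds (Metric.closedBall_mem_nhds _ one_pos) Filter.univ_mem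
      refine Filter.eventually_of_mem hnb ?_
      rintro ⟨x, x'⟩ hx
      refine Filter.Eventually.of_forall fun g => ?_
      by_cases hg : g ∈ T
      · rw [Set.indicator_of_mem hg, Real.norm_eq_abs,
          abs_of_nonneg (mul_nonneg (sq_nonneg _) (sq_nonneg _))]
        exact mul_le_mul (hsq _) (hsq _) (sq_nonneg _) (sq_nonneg _)
      · rw [Set.indicator_of_notMem hg]
        have hz : χ (g • x) = 0 := by
          by_contra hnz
          exact hg (hTmem g x hx.1 hnz)
        simp [hz]
    · exact (integrable_indicator_iff hTcpt.isClosed.measurableSet).2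
        (integrableOn_const hTcpt.measure_lt_top.ne)
    · refine Filter.Eventually.of_forall fun g => Continuous.continuousAt ?_
      exact ((hχ_cont.comp (continuous_const.smul continuous_fst)).pow 2).mul
        ((hχ_cont.comp (continuous_const.smul continuous_snd)).pow 2)
  have hκeq : κ = fun p : X × X =>
      ((∫ g, χ (g • p.1) ^ 2 * χ (g • p.2) ^ 2 ∂μG : ℝ) : ℂ) * κG p := by
    funext p
    rcases p with ⟨x, x'⟩
    exact hκ_def x x'
  have hmeas : Measurable κ := by
    rw [hκeq]
    exact (Complex.measurable_ofReal.comp hIcont.measurable).mul hκG_meas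
  refine ⟨hmeas, ⟨C ^ 2 * max Cκ 0, ?_⟩, ?_, ?_, ?_⟩
  · rintro ⟨x, x'⟩
    rw [hκ_def x x', norm_mul, Complex.norm_real, Real.norm_eq_abs, abs_of_nonneg (hInn x x')]
    exact mul_le_mul (hIle x x') ((hCκ _).trans (le_max_left _ _)) (norm_nonneg _) (sq_nonneg C)
  · intro g x x'
    rw [hκ_def (g • x) (g • x'), hκ_def x x', hκG_inv g g x x']
    have e : (∫ h, χ (h • (g • x)) ^ 2 * χ (h • (g • x')) ^ 2 ∂μG)
        = ∫ h, χ (h • x) ^ 2 * χ (h • x') ^ 2 ∂μG := by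
      have h1 := integral_mul_right_eq_self (μ := μG)
        (fun h : G => χ (h • x) ^ 2 * χ (h • x') ^ 2) g
      simp only [smul_smul]
      exact h1
    rw [e]
  · intro x x' hd
    rw [hκ_def]
    rcases eq_or_ne (∫ g, χ (g • x) ^ 2 * χ (g • x') ^ 2 ∂μG) 0 with h0 | h0
    · rw [h0]
      simp
    · have hxx : ∃ g : G, χ (g • x) ≠ 0 ∧ χ (g • x') ≠ 0 := by
        by_contra hc
        push_neg at hc
        apply h0
        have hz : (fun g : G => χ (g • x) ^ 2 * χ (g • x') ^ 2) = fun _ => 0 := by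
          funext g
          by_cases h : χ (g • x) = 0
          · rw [h]; ring
          · rw [hc g h]; ring
        rw [hz, integral_zero]
      obtain ⟨g, hgx, hgx'⟩ := hxx
      have h1 := hχ_transv (g • x) (g • x') hgx hgx'
      have hd2 : ∀ k : G, dist (k • (g • x)) (g • x') = dist ((g⁻¹ * k * g) • x) x' := by
        intro k
        rw [← hiso g ((g⁻¹ * k * g) • x) x', smul_smul, smul_smul]
        have e : g * (g⁻¹ * k * g) = k * g := by group
        rw [e]
      have hinf : (⨅ k : G, dist (k • (g • x)) (g • x')) = ⨅ k : G, dist (k • x) x' := by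
        rw [← sInf_range, ← sInf_range]
        congr 1
        ext t
        simp only [Set.mem_range]
        constructor
        · rintro ⟨k, rfl⟩
          exact ⟨g⁻¹ * k * g, (hd2 k).symm⟩
        · rintro ⟨k, rfl⟩
          refine ⟨g * k * g⁻¹, ?_⟩
          rw [hd2 (g * k * g⁻¹)]
          have e : g⁻¹ * (g * k * g⁻¹) * g = k := by group
          rw [e]
      rw [hinf] at h1
      have hdist : dist (g • x) (g • x') = dist x x' := hiso g x x'
      have h2 : r < ⨅ k : G, dist (k • x) x' := by
        rw [hdist] at h1
        linarith
      rw [hκG_prop x x' h2, mul_zero]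
  · intro x x'
    set K' : Set G := closure {h : G | χ (h • x') ≠ 0} with hK'
    set L : Set G := (closure {g : G | χ (g • x) ≠ 0})⁻¹ * K' with hLdef
    have hK'c : IsCompact K' := hχ_cpt x'
    have hLc : IsCompact L := ((hχ_cpt x).inv).mul hK'c
    have step0 : ∀ g : G, κ (g⁻¹ • x, x') =
        ((∫ h, χ ((h * g⁻¹) • x) ^ 2 * χ (h • x') ^ 2 ∂μG : ℝ) : ℂ) * κG (x, x') := by
      intro g
      rw [hκ_def]
      have e1 : κG (g⁻¹ • x, x') = κG (x, x') := by
        have h1 := hκG_inv g⁻¹ 1 x x'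
        rwa [one_smul] at h1
      simp only [smul_smul]
      rw [e1]
    have hmem : ∀ g h : G, χ ((h * g⁻¹) • x) ≠ 0 → χ (h • x') ≠ 0 → g ∈ L := by
      intro g h h1 h2
      have hg' : g = (h * g⁻¹)⁻¹ * h := by group
      rw [hg']
      exact Set.mul_mem_mul (Set.inv_mem_inv.2 (subset_closure h1)) (subset_closure h2)
    have hmain : (∫ g, ∫ h, χ ((h * g⁻¹) • x) ^ 2 * χ (h • x') ^ 2 ∂μG ∂μG) = 1 := by
      set f : G → G → ℝ := fun g h => χ ((h * g⁻¹) • x) ^ 2 * χ (h • x') ^ 2 with hfdef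
      have hc : Continuous (Function.uncurry f) := by
        show Continuous fun p : G × G => χ ((p.2 * p.1⁻¹) • x) ^ 2 * χ (p.2 • x') ^ 2
        exact ((hχ_cont.comp ((continuous_snd.mul continuous_fst.inv).smul
          continuous_const)).pow 2).mul
          ((hχ_cont.comp (continuous_snd.smul continuous_const)).pow 2)
      have hsupp : HasCompactSupport (Function.uncurry f) := by
        refine IsCompact.of_isClosed_subset (hLc.prod hK'c) (isClosed_tsupport _)
          (closure_minimal ?_ (hLc.isClosed.prod hK'c.isClosed))
        rintro ⟨g, h⟩ hp
        have hp' : χ ((h * g⁻¹) • x) ^ 2 * χ (h • x') ^ 2 ≠ 0 := hp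
        have h1 : χ ((h * g⁻¹) • x) ≠ 0 := by
          intro h0
          apply hp'
          rw [h0]; ring
        have h2 : χ (h • x') ≠ 0 := by
          intro h0
          apply hp'
          rw [h0]; ring
        exact Set.mem_prod.2 ⟨hmem g h h1 h2, subset_closure h2⟩
      have hswap := integral_integral_swap_of_hasCompactSupport hc hsupp
        (μ := μG) (ν := μG)
      rw [hswap]
      have step2 : ∀ h : G,
          (∫ g, χ ((h * g⁻¹) • x) ^ 2 * χ (h • x') ^ 2 ∂μG) = χ (h • x') ^ 2 := by
        intro h
        rw [integral_mul_const]
        have e1 : (∫ g, χ ((h * g⁻¹) • x) ^ 2 ∂μG) = ∫ g, χ ((h * g) • x) ^ 2 ∂μG :=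
          integral_inv_eq_self (fun g => χ ((h * g) • x) ^ 2) μG
        have e2 : (∫ g, χ ((h * g) • x) ^ 2 ∂μG) = ∫ g, χ (g • x) ^ 2 ∂μG :=
          integral_mul_left_eq_self (fun g => χ (g • x) ^ 2) h
        rw [e1, e2, hχ_int x, one_mul]
      calc (∫ h, ∫ g, f g h ∂μG ∂μG)
          = ∫ h, χ (h • x') ^ 2 ∂μG := integral_congr_ae (Filter.Eventually.of_forall step2)
        _ = 1 := hχ_int x'
    calc (∫ g, κ (g⁻¹ • x, x') ∂μG)
        = ∫ g, ((∫ h, χ ((h * g⁻¹) • x) ^ 2 * χ (h • x') ^ 2 ∂μG : ℝ) : ℂ) * κG (x, x') ∂μG :=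
          integral_congr_ae (Filter.Eventually.of_forall step0)
      _ = (∫ g, ((∫ h, χ ((h * g⁻¹) • x) ^ 2 * χ (h • x') ^ 2 ∂μG : ℝ) : ℂ) ∂μG)
            * κG (x, x') := integral_mul_const _ _
      _ = ((∫ g, ∫ h, χ ((h * g⁻¹) • x) ^ 2 * χ (h • x') ^ 2 ∂μG ∂μG : ℝ) : ℂ)
            * κG (x, x') := by
          congr 1
          exact integral_ofReal
      _ = κG (x, x') := by rw [hmain]; simp
end

section
/- Let (X,d) be a metric space with a Borel measure μ, and let T be a bounded operator on L²(X,μ) of propagation at most r. Let {ψ_j}_{j∈ℕ} and {ψ'_k}_{k∈ℕ} be two families of continuous functions X → [0,1], each summing pointwise to 1 on X, and such that in each family, for every index j and every ρ > 0, the set of indices k in that family with d(supp ψ_j, supp ψ_k) ≤ ρ is finite. Let s : X → ℂ be Borel with ψ_j·s ∈ L²(X,μ) and ψ'_k·s ∈ L²(X,μ) for all j, k. Then for every bounded Borel function f : X → ℂ with bounded nonempty support: (i) f·T(ψ_j·s) = 0 in L²(X,μ) for all but finitely many j; and (ii) Σ_j f·T(ψ_j·s) = Σ_k f·T(ψ'_k·s)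 in L²(X,μ), both sums having only finitely many nonzero terms. In particular, the averaged operator applied to s, localised by any f, is independent of the choice of such a partition of unity. -/
open MeasureTheory Function

/-- Let `T` be a bounded operator on `L²(X,μ)` of propagation at most
`r` (expressed via multiplication operators `M f`), and let `{ψ_j}`, `{ψ'_k}` be two
partitions of unity whose members have uniformly locally finite families of supports.
For a Borel `s` with `ψ_j·s, ψ'_k·s ∈ L²`, and any bounded Borel `f` with bounded
nonempty support, only finitely many of the elements `M f (T (ψ_j·s))` are nonzero and
the resulting finite sums for the two partitions agree: the averaged operator applied to
`s`, localised by `f`, is independent of the partition of unity. -/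
theorem averaged_operator_partition_independent
    {X : Type*} [MetricSpace X] [MeasurableSpace X] [BorelSpace X]
    (μ : Measure X) (r : ℝ) (hr : 0 < r)
    (T : Lp ℂ 2 μ →L[ℂ] Lp ℂ 2 μ)
    (M : (X → ℂ) → Lp ℂ 2 μ →L[ℂ] Lp ℂ 2 μ)
    (hM : ∀ f : X → ℂ, Measurable f → (∃ C, ∀ x, ‖f x‖ ≤ C) →
      ∀ u : Lp ℂ 2 μ, (M f u : X → ℂ) =ᵐ[μ] fun x => f x * (u : X → ℂ) x)
    (hT_prop : ∀ f f' : X → ℂ, Measurable f → Measurable f' →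
      (∃ C, ∀ x, ‖f x‖ ≤ C) → (∃ C, ∀ x, ‖f' x‖ ≤ C) →
      ENNReal.ofReal r < (⨅ x ∈ support f, ⨅ y ∈ support f', edist x y) →
      (M f).comp (T.comp (M f')) = 0)
    (ψ ψ' : ℕ → X → ℝ)
    (hψ_cont : ∀ j, Continuous (ψ j)) (hψ'_cont : ∀ k, Continuous (ψ' k))
    (hψ_01 : ∀ j x, ψ j x ∈ Set.Icc (0 : ℝ) 1) (hψ'_01 : ∀ k x, ψ' k x ∈ Set.Icc (0 : ℝ) 1)
    (hψ_sum : ∀ x, HasSum (fun j => ψ j x) 1) (hψ'_sum : ∀ x, HasSum (fun k => ψ' k x) 1)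
    (hψ_fin : ∀ (j : ℕ) (ρ : ℝ), 0 < ρ →
      {k : ℕ | (⨅ x ∈ support (ψ j), ⨅ y ∈ support (ψ k), edist x y) ≤
        ENNReal.ofReal ρ}.Finite)
    (hψ'_fin : ∀ (j : ℕ) (ρ : ℝ), 0 < ρ →
      {k : ℕ | (⨅ x ∈ support (ψ' j), ⨅ y ∈ support (ψ' k), edist x y) ≤
        ENNReal.ofReal ρ}.Finite)
    (s : X → ℂ) (hs : Measurable s)
    (hsL2 : ∀ j, MemLp (fun x => (ψ j x : ℂ) * s x) 2 μ)
    (hsL2' : ∀ k, MemLp (fun x => (ψ' k x : ℂ) * s x) 2 μ)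
    (f : X → ℂ) (hf : Measurable f) (hf_bdd : ∃ C, ∀ x, ‖f x‖ ≤ C)
    (hf_supp : Bornology.IsBounded (support f)) (hf_ne : (support f).Nonempty) :
    {j : ℕ | M f (T (MemLp.toLp (fun x => (ψ j x : ℂ) * s x) (hsL2 j))) ≠ 0}.Finite ∧
    {k : ℕ | M f (T (MemLp.toLp (fun x => (ψ' k x : ℂ) * s x) (hsL2' k))) ≠ 0}.Finite ∧
    ∑ᶠ j : ℕ, M f (T (MemLp.toLp (fun x => (ψ j x : ℂ) * s x) (hsL2 j))) =
      ∑ᶠ k : ℕ, M f (T (MemLp.toLp (fun x => (ψ' k x : ℂ) * s x) (hsL2' k))) := by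
  classical
  obtain ⟨x0, hx0⟩ := hf_ne
  obtain ⟨R0, hR0⟩ := hf_supp.subset_closedBall x0
  have hR0nn : 0 ≤ R0 := by simpa using hR0 hx0
  -- Key vanishing lemma via propagation
  have key : ∀ (u : X → ℂ) (hu : MemLp u 2 μ) (U : Set X), MeasurableSet U →
      support u ⊆ U →
      (∀ x ∈ support f, ∀ y ∈ U, ENNReal.ofReal (r + 1) ≤ edist x y) →
      M f (T (hu.toLp u)) = 0 := by
    intro u hu U hU hsupp hdist
    set g : X → ℂ := U.indicator (fun _ => (1 : ℂ)) with hg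
    have hg_meas : Measurable g := measurable_const.indicator hU
    have hg_bdd : ∃ C, ∀ x, ‖g x‖ ≤ C := by
      refine ⟨1, fun x => ?_⟩
      by_cases hx : x ∈ U <;>
        simp [hg, Set.indicator_of_mem, Set.indicator_of_notMem, hx]
    have hg_supp : support g ⊆ U := Set.support_indicator_subset
    have hMg : M g (hu.toLp u) = hu.toLp u := by
      apply Lp.ext
      have h1 := hM g hg_meas hg_bdd (hu.toLp u)
      have h2 : (hu.toLp u : X → ℂ) =ᵐ[μ] u := hu.coeFn_toLp
      refine h1.trans (Filter.EventuallyEq.trans ?_ h2.symm)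
      filter_upwards [h2] with x hx
      rw [hx]
      by_cases hxu : u x = 0
      · simp [hxu]
      · rw [hg, Set.indicator_of_mem (hsupp hxu)]; ring
    have hzero : (M f).comp (T.comp (M g)) = 0 := by
      apply hT_prop f g hf hg_meas hf_bdd hg_bdd
      calc ENNReal.ofReal r < ENNReal.ofReal (r + 1) :=
            (ENNReal.ofReal_lt_ofReal_iff (by linarith)).mpr (by linarith)
        _ ≤ ⨅ x ∈ support f, ⨅ y ∈ support g, edist x y :=
            le_iInf₂ fun x hx => le_iInf₂ fun y hy => hdist x hx y (hg_supp hy)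
    calc M f (T (hu.toLp u)) = ((M f).comp (T.comp (M g))) (hu.toLp u) := by
          simp [ContinuousLinearMap.comp_apply, hMg]
      _ = 0 := by rw [hzero]; simp
  -- finiteness of the set of indices close to supp f
  have finS : ∀ (φ : ℕ → X → ℝ), (∀ x, HasSum (fun k => φ k x) 1) →
      (∀ (j : ℕ) (ρ : ℝ), 0 < ρ →
        {k : ℕ | (⨅ x ∈ support (φ j), ⨅ y ∈ support (φ k), edist x y) ≤
          ENNReal.ofReal ρ}.Finite) →
      {k : ℕ | (⨅ x ∈ support f, ⨅ y ∈ support (φ k), edist x y) ≤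
        ENNReal.ofReal (r + 1)}.Finite := by
    intro φ hsum hfin
    obtain ⟨j0, hj0⟩ : ∃ j0, x0 ∈ support (φ j0) := by
      by_contra h
      push_neg at h
      have hz : (fun j => φ j x0) = fun _ => (0 : ℝ) :=
        funext fun j => by simpa [Function.mem_support, not_not] using h j
      have h1 := hsum x0
      rw [hz] at h1
      simpa using h1.unique hasSum_zero
    refine (hfin j0 (R0 + r + 2) (by linarith)).subset ?_
    intro k hk
    simp only [Set.mem_setOf_eq] at hk ⊢
    have hlt : (⨅ x ∈ support f, ⨅ y ∈ support (φ k), edist x y) <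
        ENNReal.ofReal (r + 2) :=
      lt_of_le_of_lt hk ((ENNReal.ofReal_lt_ofReal_iff (by linarith)).mpr (by linarith))
    simp only [iInf_lt_iff] at hlt
    obtain ⟨x, hx, y, hy, hxy⟩ := hlt
    calc (⨅ x ∈ support (φ j0), ⨅ y ∈ support (φ k), edist x y)
        ≤ edist x0 y := (iInf₂_le x0 hj0).trans (iInf₂_le y hy)
      _ ≤ edist x0 x + edist x y := edist_triangle _ _ _
      _ ≤ ENNReal.ofReal R0 + ENNReal.ofReal (r + 2) := by
          refine add_le_add ?_ hxy.le
          rw [edist_dist]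
          exact ENNReal.ofReal_le_ofReal (by simpa [dist_comm] using hR0 hx)
      _ = ENNReal.ofReal (R0 + r + 2) := by
          rw [← ENNReal.ofReal_add hR0nn (by linarith)]; ring_nf
  have hSfin : {k : ℕ | (⨅ x ∈ support f, ⨅ y ∈ support (ψ k), edist x y) ≤
      ENNReal.ofReal (r + 1)}.Finite := finS ψ hψ_sum hψ_fin
  have hS'fin : {k : ℕ | (⨅ x ∈ support f, ⨅ y ∈ support (ψ' k), edist x y) ≤
      ENNReal.ofReal (r + 1)}.Finite := finS ψ' hψ'_sum hψ'_fin
  set F : Finset ℕ := hSfin.toFinset with hF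
  set F' : Finset ℕ := hS'fin.toFinset with hF'
  have hmemF : ∀ j, j ∉ F ↔
      ¬ ((⨅ x ∈ support f, ⨅ y ∈ support (ψ j), edist x y) ≤ ENNReal.ofReal (r + 1)) := by
    intro j
    simp only [hF, Set.Finite.mem_toFinset, Set.mem_setOf_eq]
  have hmemF' : ∀ k, k ∉ F' ↔
      ¬ ((⨅ x ∈ support f, ⨅ y ∈ support (ψ' k), edist x y) ≤ ENNReal.ofReal (r + 1)) := by
    intro k
    simp only [hF', Set.Finite.mem_toFinset, Set.mem_setOf_eq]
  -- far indices give a pointwise distance bound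
  have hφ_far : ∀ (φ : ℕ → X → ℝ) (k : ℕ),
      ¬ ((⨅ x ∈ support f, ⨅ y ∈ support (φ k), edist x y) ≤ ENNReal.ofReal (r + 1)) →
      ∀ x ∈ support f, ∀ y ∈ support (φ k), ENNReal.ofReal (r + 1) ≤ edist x y := by
    intro φ k hk x hx y hy
    push_neg at hk
    exact hk.le.trans ((iInf₂_le x hx).trans (iInf₂_le y hy))
  -- measurability of supports
  have hsupp_meas : ∀ (φ : ℕ → X → ℝ), (∀ k, Continuous (φ k)) → ∀ k,
      MeasurableSet (support (φ k)) := by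
    intro φ hc k
    rw [Function.support_eq_preimage]
    exact (isOpen_compl_singleton.preimage (hc k)).measurableSet
  -- vanishing of far terms
  have hvan : ∀ (φ : ℕ → X → ℝ), (∀ k, Continuous (φ k)) → ∀ (k : ℕ)
      (hu : MemLp (fun x => (φ k x : ℂ) * s x) 2 μ),
      ¬ ((⨅ x ∈ support f, ⨅ y ∈ support (φ k), edist x y) ≤ ENNReal.ofReal (r + 1)) →
      M f (T (hu.toLp _)) = 0 := by
    intro φ hc k hu hk
    refine key _ hu (support (φ k)) (hsupp_meas φ hc k) ?_ (hφ_far φ k hk)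
    intro x hx
    simp only [Function.mem_support] at hx ⊢
    intro h0
    exact hx (by simp [h0])
  -- coercion of finset sums in Lp
  have coe_sum : ∀ (G : Finset ℕ) (w : ℕ → Lp ℂ 2 μ),
      ((∑ k ∈ G, w k : Lp ℂ 2 μ) : X → ℂ) =ᵐ[μ] fun x => ∑ k ∈ G, (w k : X → ℂ) x := by
    intro G w
    induction G using Finset.induction with
    | empty => simp only [Finset.sum_empty]; exact Lp.coeFn_zero _ _ _
    | @insert a G ha ih =>
      rw [Finset.sum_insert ha]
      refine (Lp.coeFn_add _ _).trans ?_
      filter_upwards [ih] with x hx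
      simp only [Pi.add_apply, Finset.sum_insert ha, hx]
  -- decomposition lemma
  have decomp : ∀ (φ : ℕ → X → ℝ), (∀ k, Continuous (φ k)) →
      (∀ x, HasSum (fun k => φ k x) 1) →
      ∀ (G : Finset ℕ),
      (∀ k, k ∉ G → ∀ x ∈ support f, ∀ y ∈ support (φ k),
        ENNReal.ofReal (r + 1) ≤ edist x y) →
      ∀ (u : X → ℂ) (hu : MemLp u 2 μ)
      (hprod : ∀ k, MemLp (fun x => (φ k x : ℂ) * u x) 2 μ),
      M f (T (hu.toLp u)) = ∑ k ∈ G, M f (T ((hprod k).toLp _)) := by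
    intro φ hc hsum G hG u hu hprod
    set Rm : X → ℂ := fun x => u x - ∑ k ∈ G, (φ k x : ℂ) * u x with hRm
    have hRmem : MemLp Rm 2 μ :=
      hu.sub (memLp_finset_sum G (fun k _ => hprod k))
    have htoLp : hu.toLp u = (∑ k ∈ G, (hprod k).toLp _) + hRmem.toLp Rm := by
      apply Lp.ext
      have hall : ∀ᵐ x ∂μ, ∀ k ∈ G,
          (((hprod k).toLp _ : Lp ℂ 2 μ) : X → ℂ) x = (φ k x : ℂ) * u x :=
        (Filter.eventually_all_finset G).mpr fun k _ => (hprod k).coeFn_toLp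
      refine hu.coeFn_toLp.trans (Filter.EventuallyEq.symm ?_)
      refine (Lp.coeFn_add _ _).trans ?_
      filter_upwards [coe_sum G (fun k => (hprod k).toLp _), hRmem.coeFn_toLp, hall]
        with x h1 h2 h3
      simp only [Pi.add_apply, h1, h2]
      simp only [hRm]
      rw [Finset.sum_congr rfl h3]
      ring
    have hRzero : M f (T (hRmem.toLp Rm)) = 0 := by
      refine key Rm hRmem (⋃ k ∈ ({k | k ∉ G} : Set ℕ), support (φ k))
        (MeasurableSet.biUnion (Set.to_countable _)
          (fun k _ => hsupp_meas φ hc k)) ?_ ?_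
      · intro x hx
        simp only [Function.mem_support, hRm] at hx
        have hne : (∑ k ∈ G, φ k x) ≠ 1 := by
          intro h1
          apply hx
          have he : ∑ k ∈ G, (φ k x : ℂ) * u x = (∑ k ∈ G, (φ k x : ℂ)) * u x :=
            (Finset.sum_mul _ _ _).symm
          rw [he]
          have hc1 : (∑ k ∈ G, (φ k x : ℂ)) = 1 := by exact_mod_cast h1
          rw [hc1, one_mul, sub_self]
        obtain ⟨k, hkG, hk0⟩ : ∃ k, k ∉ G ∧ φ k x ≠ 0 := by
          by_contra h
          push_neg at h
          have hh : HasSum (fun k => φ k x) (∑ k ∈ G, φ k x) :=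
            hasSum_sum_of_ne_finset_zero (fun k hk => h k hk)
          exact hne ((hsum x).unique hh).symm
        exact Set.mem_biUnion hkG hk0
      · intro x hx y hy
        simp only [Set.mem_iUnion, Set.mem_setOf_eq] at hy
        obtain ⟨k, hkG, hky⟩ := hy
        exact hG k hkG x hx y hky
    rw [htoLp]
    simp only [map_add, map_sum]
    rw [hRzero, add_zero]
  -- membership proofs for products
  have hprodJK : ∀ j k, MemLp (fun x => (ψ' k x : ℂ) * ((ψ j x : ℂ) * s x)) 2 μ := by
    intro j k
    refine (hsL2 j).of_le
      (((Complex.continuous_ofReal.comp (hψ'_cont k)).aestronglyMeasurable).mul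
        (hsL2 j).aestronglyMeasurable) ?_
    refine Filter.Eventually.of_forall fun x => ?_
    rw [norm_mul]
    have h1 : ‖(ψ' k x : ℂ)‖ ≤ 1 := by
      rw [Complex.norm_real, Real.norm_eq_abs, abs_le]
      exact ⟨by linarith [(hψ'_01 k x).1], (hψ'_01 k x).2⟩
    calc ‖(ψ' k x : ℂ)‖ * ‖(ψ j x : ℂ) * s x‖ ≤ 1 * ‖(ψ j x : ℂ) * s x‖ :=
          mul_le_mul_of_nonneg_right h1 (norm_nonneg _)
      _ = ‖(ψ j x : ℂ) * s x‖ := one_mul _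
  have hprodKJ : ∀ k j, MemLp (fun x => (ψ j x : ℂ) * ((ψ' k x : ℂ) * s x)) 2 μ := by
    intro k j
    refine (hsL2' k).of_le
      (((Complex.continuous_ofReal.comp (hψ_cont j)).aestronglyMeasurable).mul
        (hsL2' k).aestronglyMeasurable) ?_
    refine Filter.Eventually.of_forall fun x => ?_
    rw [norm_mul]
    have h1 : ‖(ψ j x : ℂ)‖ ≤ 1 := by
      rw [Complex.norm_real, Real.norm_eq_abs, abs_le]
      exact ⟨by linarith [(hψ_01 j x).1], (hψ_01 j x).2⟩
    calc ‖(ψ j x : ℂ)‖ * ‖(ψ' k x : ℂ) * s x‖ ≤ 1 * ‖(ψ' k x : ℂ) * s x‖ :=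
          mul_le_mul_of_nonneg_right h1 (norm_nonneg _)
      _ = ‖(ψ' k x : ℂ) * s x‖ := one_mul _
  have hvanF : ∀ j, j ∉ F → M f (T ((hsL2 j).toLp _)) = 0 := fun j hj =>
    hvan ψ hψ_cont j (hsL2 j) ((hmemF j).mp hj)
  have hvanF' : ∀ k, k ∉ F' → M f (T ((hsL2' k).toLp _)) = 0 := fun k hk =>
    hvan ψ' hψ'_cont k (hsL2' k) ((hmemF' k).mp hk)
  refine ⟨?_, ?_, ?_⟩
  · refine hSfin.subset fun j hj => ?_
    by_contra hjS
    exact hj (hvanF j ((hmemF j).mpr hjS))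
  · refine hS'fin.subset fun k hk => ?_
    by_contra hkS
    exact hk (hvanF' k ((hmemF' k).mpr hkS))
  · have hsub1 : support
        (fun j => M f (T (MemLp.toLp (fun x => (ψ j x : ℂ) * s x) (hsL2 j)))) ⊆ ↑F := by
      intro j hj
      by_contra hjF
      exact hj (hvanF j hjF)
    have hsub2 : support
        (fun k => M f (T (MemLp.toLp (fun x => (ψ' k x : ℂ) * s x) (hsL2' k)))) ⊆ ↑F' := by
      intro k hk
      by_contra hkF
      exact hk (hvanF' k hkF)
    rw [finsum_eq_sum_of_support_subset _ hsub1, finsum_eq_sum_of_support_subset _ hsub2]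
    have hGψ' : ∀ k, k ∉ F' → ∀ x ∈ support f, ∀ y ∈ support (ψ' k),
        ENNReal.ofReal (r + 1) ≤ edist x y := fun k hk =>
      hφ_far ψ' k ((hmemF' k).mp hk)
    have hGψ : ∀ j, j ∉ F → ∀ x ∈ support f, ∀ y ∈ support (ψ j),
        ENNReal.ofReal (r + 1) ≤ edist x y := fun j hj =>
      hφ_far ψ j ((hmemF j).mp hj)
    have hswap : ∀ j k, (hprodJK j k).toLp _ = (hprodKJ k j).toLp _ := fun j k =>
      MemLp.toLp_congr _ _ (Filter.EventuallyEq.of_eq (funext fun x => by ring))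
    calc ∑ j ∈ F, M f (T (MemLp.toLp (fun x => (ψ j x : ℂ) * s x) (hsL2 j)))
        = ∑ j ∈ F, ∑ k ∈ F', M f (T ((hprodJK j k).toLp _)) :=
          Finset.sum_congr rfl fun j _ =>
            decomp ψ' hψ'_cont hψ'_sum F' hGψ' _ (hsL2 j) (fun k => hprodJK j k)
      _ = ∑ k ∈ F', ∑ j ∈ F, M f (T ((hprodKJ k j).toLp _)) := by
          rw [Finset.sum_comm]
          exact Finset.sum_congr rfl fun k _ => Finset.sum_congr rfl fun j _ => by
            rw [hswap j k]
      _ = ∑ k ∈ F', M f (T (MemLp.toLp (fun x => (ψ' k x : ℂ) * s x) (hsL2' k))) :=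
          Finset.sum_congr rfl fun k _ =>
            (decomp ψ hψ_cont hψ_sum F hGψ _ (hsL2' k) (fun j => hprodKJ k j)).symm
end

section
/- Let χ : X → [0,∞) be a bounded continuous function such that ∫_G χ(g·x)² dg = 1 for every x ∈ X and such that {g ∈ G : χ(g·x) ≠ 0} is relatively compact for every x ∈ X. Let κ be a bounded Borel G-equivariant kernel of propagation at most r, and let σ : X → ℂ be a Borel G-invariant function (σ(g·x) = σ(x) for all g, x) such that for each fixed x ∈ X the function (x',g) ↦ χ(x')² · κ(g⁻¹·x, x') · σ(x') is integrable on X × G with respect to μ ⊗ dg. Then for every x ∈ X, ∫_X ∫_G χ(x')² κ(g⁻¹·x, x') σ(x') dg dμ(x') = ∫_{X/G} Av(κ)(x, s₀(ω)) · σ(s₀(ω)) dν(ω). Equivalently, compressing the averaged-over-G integral operator by the cutoff χ and applying it to χ·σ gives χ times the action of the averaged kernel Av(κ) over the orbit space on σ. -/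
open MeasureTheory

/-- Compressing the averaged-over-`G` integral operator with equivariant
kernel `κ` by a cutoff function `χ` and applying it to `χ·σ`, for a `G`-invariant `σ`,
gives the action of the averaged kernel `Av(κ)` over the orbit space on `σ`:
`∫_X ∫_G χ(x')² κ(g⁻¹·x, x') σ(x') dg dμ(x') = ∫_{X/G} Av(κ)(x, s₀(ω)) σ(s₀(ω)) dν(ω)`. -/
theorem compressed_averaged_operator_eq_orbit_space_operator
    {G X : Type*}
    [Group G] [TopologicalSpace G] [IsTopologicalGroup G] [LocallyCompactSpace G] [T2Space G]
    [MeasurableSpace G] [BorelSpace G]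
    (μG : Measure G) [μG.IsHaarMeasure] [μG.IsMulRightInvariant] [μG.IsInvInvariant]
    [MetricSpace X] [ProperSpace X] [MeasurableSpace X] [BorelSpace X]
    [MulAction G X] [ContinuousSMul G X]
    (hiso : ∀ (g : G) (x y : X), dist (g • x) (g • y) = dist x y)
    (hproper : IsProperMap fun p : G × X => (p.1 • p.2, p.2))
    (μ : Measure X) [SMulInvariantMeasure G X μ] [IsLocallyFiniteMeasure μ]
    [MeasurableSpace (Quotient (MulAction.orbitRel G X))]
    (ν : Measure (Quotient (MulAction.orbitRel G X)))
    (s₀ : Quotient (MulAction.orbitRel G X) → X)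
    (hs₀_meas : Measurable s₀)
    (hs₀_sec : ∀ ω, Quotient.mk (MulAction.orbitRel G X) (s₀ ω) = ω)
    (hWeil : ∀ φ : X → ℂ, Integrable φ μ →
      ∫ x, φ x ∂μ = ∫ ω, ∫ g, φ (g • s₀ ω) ∂μG ∂ν)
    (χ : X → ℝ) (hχ_cont : Continuous χ) (hχ_nonneg : ∀ x, 0 ≤ χ x)
    (hχ_bdd : ∃ C, ∀ x, χ x ≤ C)
    (hχ_cpt : ∀ x : X, IsCompact (closure {g : G | χ (g • x) ≠ 0}))
    (hχ_int : ∀ x : X, ∫ g, (χ (g • x)) ^ 2 ∂μG = 1)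
    (κ : X × X → ℂ) (r : ℝ)
    (hκ_meas : Measurable κ)
    (hκ_bdd : ∃ C, ∀ p, ‖κ p‖ ≤ C)
    (hκ_equiv : ∀ (g : G) (x x' : X), κ (g • x, g • x') = κ (x, x'))
    (hκ_prop : ∀ x x' : X, r < dist x x' → κ (x, x') = 0)
    (σ : X → ℂ) (hσ_meas : Measurable σ)
    (hσ_inv : ∀ (g : G) (x : X), σ (g • x) = σ x)
    (hint : ∀ x : X,
      Integrable (fun p : X × G =>
        ((χ p.1 : ℂ)) ^ 2 * κ (p.2⁻¹ • x, p.1) * σ p.1) (μ.prod μG)) :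
    ∀ x : X,
      ∫ x' : X, (∫ g : G, ((χ x' : ℂ)) ^ 2 * κ (g⁻¹ • x, x') * σ x' ∂μG) ∂μ =
        ∫ ω, (∫ g : G, κ (g⁻¹ • x, s₀ ω) ∂μG) * σ (s₀ ω) ∂ν := by
  intro x
  -- G is σ-compact since the action is proper and X is a proper metric space
  haveI : SigmaCompactSpace G := by
    refine ⟨⟨fun n => {g : G | g • x ∈ Metric.closedBall x n}, fun n => ?_, ?_⟩⟩
    · have hc : IsCompact ((fun p : G × X => (p.1 • p.2, p.2)) ⁻¹'
          (Metric.closedBall x n ×ˢ ({x} : Set X))) :=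
        hproper.isCompact_preimage ((isCompact_closedBall x n).prod isCompact_singleton)
      have heq : {g : G | g • x ∈ Metric.closedBall x n} =
          Prod.fst '' ((fun p : G × X => (p.1 • p.2, p.2)) ⁻¹'
            (Metric.closedBall x n ×ˢ ({x} : Set X))) := by
        ext g
        simp only [Set.mem_setOf_eq, Set.mem_image, Set.mem_preimage, Set.mem_prod,
          Set.mem_singleton_iff, Prod.exists]
        constructor
        · intro h; exact ⟨g, x, ⟨h, rfl⟩, rfl⟩
        · rintro ⟨g', y, ⟨h1, rfl⟩, rfl⟩; exact h1
      show IsCompact {g : G | g • x ∈ Metric.closedBall x n}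
      rw [heq]
      exact hc.image continuous_fst
    · ext g
      simp only [Set.mem_iUnion, Set.mem_univ, iff_true, Set.mem_setOf_eq,
        Metric.mem_closedBall]
      obtain ⟨n, hn⟩ := exists_nat_ge (dist (g • x) x)
      exact ⟨n, hn⟩
  have hφint : Integrable
      (fun x' : X => ∫ g : G, ((χ x' : ℂ)) ^ 2 * κ (g⁻¹ • x, x') * σ x' ∂μG) μ :=
    (hint x).integral_prod_left
  rw [hWeil _ hφint]
  refine integral_congr_ae (Filter.Eventually.of_forall fun ω => ?_)
  set s := s₀ ω with hs
  -- invariance of the averaged kernel in the second variable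
  have hA : ∀ h : G, (∫ g : G, κ (g⁻¹ • x, h • s) ∂μG) = ∫ g : G, κ (g⁻¹ • x, s) ∂μG := by
    intro h
    have hpt : ∀ g : G, κ (g⁻¹ • x, h • s) = κ ((g * h)⁻¹ • x, s) := by
      intro g
      rw [← hκ_equiv h⁻¹ (g⁻¹ • x) (h • s)]
      rw [inv_smul_smul, mul_inv_rev, mul_smul]
    simp_rw [hpt]
    exact integral_mul_right_eq_self (fun g : G => κ (g⁻¹ • x, s)) h
  -- compute the inner integral over h
  have hinner : ∀ h : G,
      (∫ g : G, ((χ (h • s) : ℂ)) ^ 2 * κ (g⁻¹ • x, h • s) * σ (h • s) ∂μG)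
        = ((χ (h • s) : ℂ)) ^ 2 * ((∫ g : G, κ (g⁻¹ • x, s) ∂μG) * σ s) := by
    intro h
    simp_rw [mul_assoc]
    rw [integral_const_mul, integral_mul_const, hA h, hσ_inv h s]
  simp only [← hs, hinner]
  rw [integral_mul_const]
  have hχc : (∫ h : G, ((χ (h • s) : ℂ)) ^ 2 ∂μG) = 1 := by
    have h1 : ∀ h : G, ((χ (h • s) : ℂ)) ^ 2 = (((χ (h • s)) ^ 2 : ℝ) : ℂ) := by
      intro h; push_cast; ring
    simp_rw [h1]
    rw [show (∫ h : G, (((χ (h • s)) ^ 2 : ℝ) : ℂ) ∂μG)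
        = ((∫ h : G, (χ (h • s)) ^ 2 ∂μG : ℝ) : ℂ) from integral_ofReal,
      hχ_int s, Complex.ofReal_one]
  rw [hχc, one_mul]
end

section
/- Let κ be a bounded Borel G-equivariant kernel of propagation at most r, let {ψ_j}_{j∈ℕ} be a family of continuous functions X → [0,1] summing pointwise to 1 and such that for every j and every ρ > 0 the set {k : d(supp ψ_j, supp ψ_k) ≤ ρ} is finite, and let s : X → ℂ be a Borel G-invariant function (s(g·x) = s(x) for all g, x) that is μ-integrable on every bounded Borel subset of X. Then for every x ∈ X: (i) the integral I_j(x) := ∫_X κ(x,x')·ψ_j(x')·s(x') dμ(x') is well defined for every j and vanishes for all but finitely many j; and (ii) Σ_j I_j(x) = ∫_{X/G} Av(κ)(x, s₀(ω)) · s(s₀(ω)) dν(ω). That is, the average over the partition of unity of the integral operator with equivariant kernel κ, applied to the G-invariant section s, is the integral operator over the orbit space with the averaged kernel Av(κ). -/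
open MeasureTheory Function

/-- Averaging the integral operator with `G`-equivariant kernel `κ` over
a suitable partition of unity `{ψ_j}` and applying it to a `G`-invariant section `s`
yields the integral operator over the orbit space with the averaged kernel `Av(κ)`:
each `I_j(x) = ∫_X κ(x,x') ψ_j(x') s(x') dμ(x')` is well defined, vanishes for all but
finitely many `j`, and `Σ_j I_j(x) = ∫_{X/G} Av(κ)(x, s₀(ω)) s(s₀(ω)) dν(ω)`. -/
theorem averaged_operator_on_invariant_section
    {G X : Type*}
    [Group G] [TopologicalSpace G] [IsTopologicalGroup G] [LocallyCompactSpace G] [T2Space G]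
    [MeasurableSpace G] [BorelSpace G]
    (μG : Measure G) [μG.IsHaarMeasure] [μG.IsMulRightInvariant] [μG.IsInvInvariant]
    [MetricSpace X] [ProperSpace X] [MeasurableSpace X] [BorelSpace X]
    [MulAction G X] [ContinuousSMul G X]
    (hiso : ∀ (g : G) (x y : X), dist (g • x) (g • y) = dist x y)
    (hproper : IsProperMap fun p : G × X => (p.1 • p.2, p.2))
    (μ : Measure X) [SMulInvariantMeasure G X μ] [IsLocallyFiniteMeasure μ]
    [MeasurableSpace (Quotient (MulAction.orbitRel G X))]
    (ν : Measure (Quotient (MulAction.orbitRel G X)))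
    (s₀ : Quotient (MulAction.orbitRel G X) → X)
    (hs₀_meas : Measurable s₀)
    (hs₀_sec : ∀ ω, Quotient.mk (MulAction.orbitRel G X) (s₀ ω) = ω)
    (hWeil : ∀ φ : X → ℂ, Integrable φ μ →
      ∫ x, φ x ∂μ = ∫ ω, ∫ g, φ (g • s₀ ω) ∂μG ∂ν)
    (κ : X × X → ℂ) (r : ℝ)
    (hκ_meas : Measurable κ)
    (hκ_bdd : ∃ C, ∀ p, ‖κ p‖ ≤ C)
    (hκ_equiv : ∀ (g : G) (x x' : X), κ (g • x, g • x') = κ (x, x'))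
    (hκ_prop : ∀ x x' : X, r < dist x x' → κ (x, x') = 0)
    (ψ : ℕ → X → ℝ)
    (hψ_cont : ∀ j, Continuous (ψ j))
    (hψ_01 : ∀ j x, ψ j x ∈ Set.Icc (0 : ℝ) 1)
    (hψ_sum : ∀ x, HasSum (fun j => ψ j x) 1)
    (hψ_fin : ∀ (j : ℕ) (ρ : ℝ), 0 < ρ →
      {k : ℕ | (⨅ x ∈ support (ψ j), ⨅ y ∈ support (ψ k), edist x y) ≤
        ENNReal.ofReal ρ}.Finite)
    (s : X → ℂ) (hs_meas : Measurable s)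
    (hs_inv : ∀ (g : G) (x : X), s (g • x) = s x)
    (hs_int : ∀ B : Set X, Bornology.IsBounded B → IntegrableOn s B μ) :
    ∀ x : X,
      (∀ j : ℕ, Integrable (fun x' : X => κ (x, x') * (ψ j x' : ℂ) * s x') μ) ∧
      {j : ℕ | ∫ x' : X, κ (x, x') * (ψ j x' : ℂ) * s x' ∂μ ≠ 0}.Finite ∧
      ∑ᶠ j : ℕ, ∫ x' : X, κ (x, x') * (ψ j x' : ℂ) * s x' ∂μ =
        ∫ ω, (∫ g : G, κ (g⁻¹ • x, s₀ ω) ∂μG) * s (s₀ ω) ∂ν := by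

  obtain ⟨C, hC⟩ := hκ_bdd
  intro x
  have hC0 : 0 ≤ C := le_trans (norm_nonneg _) (hC (x, x))
  -- general integrability lemma
  have hint : ∀ c : X → ℝ, Measurable c → (∀ y, c y ∈ Set.Icc (0:ℝ) 1) →
      Integrable (fun x' : X => κ (x, x') * (c x' : ℂ) * s x') μ := by
    intro c hc hc01
    have hm : Measurable fun x' : X => κ (x, x') * (c x' : ℂ) * s x' :=
      ((hκ_meas.comp (measurable_const.prodMk measurable_id)).mul
        (Complex.measurable_ofReal.comp hc)).mul hs_meas
    have heq : (fun x' : X => κ (x, x') * (c x' : ℂ) * s x')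
        = Set.indicator (Metric.closedBall x r)
            (fun x' : X => κ (x, x') * (c x' : ℂ) * s x') := by
      funext x'
      by_cases h : x' ∈ Metric.closedBall x r
      · rw [Set.indicator_of_mem h]
      · rw [Set.indicator_of_notMem h]
        have hd : r < dist x x' := by
          rw [Metric.mem_closedBall, not_le] at h
          rwa [dist_comm]
        rw [hκ_prop x x' hd, zero_mul, zero_mul]
    rw [heq, integrable_indicator_iff measurableSet_closedBall]
    have hsint : IntegrableOn s (Metric.closedBall x r) μ :=
      hs_int _ Metric.isBounded_closedBall
    refine ((hsint.norm.const_mul C).mono hm.aestronglyMeasurable.restrict ?_)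
    filter_upwards with x'
    have h1 : ‖κ (x, x') * (c x' : ℂ) * s x'‖ ≤ C * ‖s x'‖ := by
      rw [norm_mul, norm_mul]
      have hc1 : ‖(c x' : ℂ)‖ ≤ 1 := by
        rw [Complex.norm_real, Real.norm_eq_abs, abs_le]
        exact ⟨le_trans (by norm_num) (hc01 x').1, (hc01 x').2⟩
      calc ‖κ (x, x')‖ * ‖(c x' : ℂ)‖ * ‖s x'‖
          ≤ C * 1 * ‖s x'‖ := by
            apply mul_le_mul_of_nonneg_right _ (norm_nonneg _)
            exact mul_le_mul (hC _) hc1 (norm_nonneg _) hC0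
        _ = C * ‖s x'‖ := by ring
    exact h1.trans (le_abs_self _)
  have hint' : ∀ j, Integrable (fun x' : X => κ (x, x') * (ψ j x' : ℂ) * s x') μ :=
    fun j => hint (ψ j) (hψ_cont j).measurable (hψ_01 j)
  -- choose j₀ with ψ j₀ x ≠ 0
  obtain ⟨j₀, hj₀⟩ : ∃ j₀, ψ j₀ x ≠ 0 := by
    by_contra h
    push_neg at h
    have h0 : HasSum (fun j : ℕ => ψ j x) 0 := by
      simpa [h] using (hasSum_zero : HasSum (fun _ : ℕ => (0:ℝ)) 0)
    have := (hψ_sum x).unique h0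
    norm_num at this
  set ρ : ℝ := max r 0 + 1 with hρdef
  have hρ : 0 < ρ := by positivity
  set F : Set ℕ := {k : ℕ | (⨅ y ∈ support (ψ j₀), ⨅ z ∈ support (ψ k), edist y z) ≤
      ENNReal.ofReal ρ} with hF
  have hFfin : F.Finite := hψ_fin j₀ ρ hρ
  -- key membership lemma
  have hmem : ∀ (k : ℕ) (x' : X), dist x x' ≤ r → ψ k x' ≠ 0 → k ∈ F := by
    intro k x' hd hk
    have hx : x ∈ support (ψ j₀) := hj₀
    have hx' : x' ∈ support (ψ k) := hk
    have h1 : (⨅ y ∈ support (ψ j₀), ⨅ z ∈ support (ψ k), edist y z) ≤ edist x x' :=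
      le_trans (iInf₂_le x hx) (iInf₂_le x' hx')
    refine le_trans h1 ?_
    rw [edist_dist]
    apply ENNReal.ofReal_le_ofReal
    calc dist x x' ≤ r := hd
      _ ≤ max r 0 := le_max_left _ _
      _ ≤ ρ := by rw [hρdef]; linarith
  -- integrand vanishes for k ∉ F
  have hzero : ∀ k ∉ F, (fun x' : X => κ (x, x') * (ψ k x' : ℂ) * s x') = 0 := by
    intro k hk
    funext x'
    by_cases hd : dist x x' ≤ r
    · by_cases hψk : ψ k x' = 0
      · simp [hψk]
      · exact absurd (hmem k x' hd hψk) hk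
    · rw [hκ_prop x x' (not_le.1 hd)]
      simp
  have hsub : {j : ℕ | ∫ x' : X, κ (x, x') * (ψ j x' : ℂ) * s x' ∂μ ≠ 0} ⊆ F := by
    intro j hj
    by_contra h
    exact hj (by rw [hzero j h]; simp)
  refine ⟨hint', hFfin.subset hsub, ?_⟩
  -- the sum
  have hsum1 : ∑ᶠ j : ℕ, ∫ x' : X, κ (x, x') * (ψ j x' : ℂ) * s x' ∂μ
      = ∑ j ∈ hFfin.toFinset, ∫ x' : X, κ (x, x') * (ψ j x' : ℂ) * s x' ∂μ := by
    apply finsum_eq_sum_of_support_subset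
    intro j hj
    simpa using hsub hj
  have hsum2 : ∑ j ∈ hFfin.toFinset, ∫ x' : X, κ (x, x') * (ψ j x' : ℂ) * s x' ∂μ
      = ∫ x' : X, κ (x, x') * s x' ∂μ := by
    rw [← integral_finset_sum _ (fun j _ => hint' j)]
    apply integral_congr_ae
    filter_upwards with x'
    by_cases hd : dist x x' ≤ r
    · have hall : ∀ k ∉ hFfin.toFinset, ψ k x' = 0 := by
        intro k hk
        by_contra hne
        exact hk (hFfin.mem_toFinset.2 (hmem k x' hd hne))
      have hψsum : ∑ j ∈ hFfin.toFinset, ψ j x' = 1 := by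
        rw [← (hψ_sum x').tsum_eq]
        exact (tsum_eq_sum hall).symm
      calc ∑ j ∈ hFfin.toFinset, κ (x, x') * (ψ j x' : ℂ) * s x'
          = (∑ j ∈ hFfin.toFinset, (ψ j x' : ℂ)) * (κ (x, x') * s x') := by
            rw [Finset.sum_mul]
            exact Finset.sum_congr rfl fun j _ => by ring
        _ = κ (x, x') * s x' := by
            rw [← Complex.ofReal_sum, hψsum]
            simp
    · rw [hκ_prop x x' (not_le.1 hd)]
      simp
  have hφ_int : Integrable (fun x' : X => κ (x, x') * s x') μ := by
    have := hint (fun _ => 1) measurable_const (fun y => by norm_num)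
    simpa using this
  rw [hsum1, hsum2, hWeil _ hφ_int]
  apply integral_congr_ae
  filter_upwards with ω
  have hptw : ∀ g : G, κ (x, g • s₀ ω) * s (g • s₀ ω) = κ (g⁻¹ • x, s₀ ω) * s (s₀ ω) := by
    intro g
    have h1 : κ (x, g • s₀ ω) = κ (g⁻¹ • x, s₀ ω) := by
      have h2 := hκ_equiv g⁻¹ x (g • s₀ ω)
      rw [inv_smul_smul] at h2
      exact h2.symm
    rw [h1, hs_inv g (s₀ ω)]
  simp_rw [hptw]
  exact integral_mul_const _ _
end

section
/- Let (X,d) be a metric space on which the group G acts by isometries, let μ be a G-invariant Borel measure on X, and let T be a bounded operator on L²(X,μ) of propagation at most r that commutes with every translation operator U_g, where (U_g u)(x) = u(g⁻¹·x). Let {ψ_j}_{j∈ℕ} be a family of continuous functions X → [0,1] summing pointwise to 1 and such that for every j and every ρ > 0 the set {k : d(supp ψ_j, supp ψ_k) ≤ ρ} is finite. Let s : X → ℂ be Borel and G-invariant (s(g·x) = s(x) for all g, x) with ψ_j·s ∈ L²(X,μ) for all j. Then for every h ∈ G and every bounded Borel f : X → ℂ with bounded nonempty support, Σ_j f·U_h(T(ψ_j·s))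 = Σ_j f·T(ψ_j·s) in L²(X,μ), both sums having only finitely many nonzero terms. That is, the averaged section Σ_j T(ψ_j·s) is G-invariant. -/
open MeasureTheory Function

private lemma lp_coeFn_sum_aux {X : Type*} [MeasurableSpace X] {μ : Measure X}
    (J : Finset ℕ) (g : ℕ → Lp ℂ 2 μ) :
    (((∑ j ∈ J, g j) : Lp ℂ 2 μ) : X → ℂ) =ᵐ[μ] fun x => ∑ j ∈ J, (g j : X → ℂ) x := by
  classical
  induction J using Finset.induction_on with
  | empty => simp only [Finset.sum_empty]; exact Lp.coeFn_zero ℂ 2 μ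
  | insert a t hni ih =>
    rw [Finset.sum_insert hni]
    refine (Lp.coeFn_add (g a) (∑ j ∈ t, g j)).trans ?_
    filter_upwards [ih] with x hx
    rw [Pi.add_apply, hx, Finset.sum_insert hni]

/-- If `T` is a bounded operator on `L²(X,μ)` of finite propagation
commuting with all translation operators `U_g`, `{ψ_j}` is a partition of unity with
uniformly locally finite supports, and `s` is a Borel `G`-invariant function with
`ψ_j·s ∈ L²`, then the averaged section `Σ_j T(ψ_j·s)` is `G`-invariant: localised by any
bounded Borel `f` with bounded nonempty support, `Σ_j f·U_h(T(ψ_j·s)) = Σ_j f·T(ψ_j·s)`,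
both sums having only finitely many nonzero terms. -/
theorem averaged_operator_section_G_invariant
    {G X : Type*}
    [Group G] [TopologicalSpace G] [IsTopologicalGroup G] [LocallyCompactSpace G] [T2Space G]
    [MeasurableSpace G] [BorelSpace G]
    [MetricSpace X] [MeasurableSpace X] [BorelSpace X]
    [MulAction G X] [ContinuousSMul G X]
    (hiso : ∀ (g : G) (x y : X), dist (g • x) (g • y) = dist x y)
    (μ : Measure X) [SMulInvariantMeasure G X μ]
    (r : ℝ) (hr : 0 < r)
    (T : Lp ℂ 2 μ →L[ℂ] Lp ℂ 2 μ)
    (M : (X → ℂ) → Lp ℂ 2 μ →L[ℂ] Lp ℂ 2 μ)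
    (hM : ∀ f : X → ℂ, Measurable f → (∃ C, ∀ x, ‖f x‖ ≤ C) →
      ∀ u : Lp ℂ 2 μ, (M f u : X → ℂ) =ᵐ[μ] fun x => f x * (u : X → ℂ) x)
    (U : G → Lp ℂ 2 μ →L[ℂ] Lp ℂ 2 μ)
    (hU : ∀ (g : G) (u : Lp ℂ 2 μ),
      (U g u : X → ℂ) =ᵐ[μ] fun x => (u : X → ℂ) (g⁻¹ • x))
    (hT_prop : ∀ f f' : X → ℂ, Measurable f → Measurable f' →
      (∃ C, ∀ x, ‖f x‖ ≤ C) → (∃ C, ∀ x, ‖f' x‖ ≤ C) →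
      ENNReal.ofReal r < (⨅ x ∈ support f, ⨅ y ∈ support f', edist x y) →
      (M f).comp (T.comp (M f')) = 0)
    (hTU : ∀ g : G, (U g).comp T = T.comp (U g))
    (ψ : ℕ → X → ℝ)
    (hψ_cont : ∀ j, Continuous (ψ j))
    (hψ_01 : ∀ j x, ψ j x ∈ Set.Icc (0 : ℝ) 1)
    (hψ_sum : ∀ x, HasSum (fun j => ψ j x) 1)
    (hψ_fin : ∀ (j : ℕ) (ρ : ℝ), 0 < ρ →
      {k : ℕ | (⨅ x ∈ support (ψ j), ⨅ y ∈ support (ψ k), edist x y) ≤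
        ENNReal.ofReal ρ}.Finite)
    (s : X → ℂ) (hs_meas : Measurable s)
    (hs_inv : ∀ (g : G) (x : X), s (g • x) = s x)
    (hsL2 : ∀ j, MemLp (fun x => (ψ j x : ℂ) * s x) 2 μ) :
    ∀ (h : G) (f : X → ℂ), Measurable f → (∃ C, ∀ x, ‖f x‖ ≤ C) →
      Bornology.IsBounded (support f) → (support f).Nonempty →
      {j : ℕ | M f (U h (T (MemLp.toLp (fun x => (ψ j x : ℂ) * s x) (hsL2 j)))) ≠ 0}.Finite ∧
      {j : ℕ | M f (T (MemLp.toLp (fun x => (ψ j x : ℂ) * s x) (hsL2 j))) ≠ 0}.Finite ∧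
      ∑ᶠ j : ℕ, M f (U h (T (MemLp.toLp (fun x => (ψ j x : ℂ) * s x) (hsL2 j)))) =
        ∑ᶠ j : ℕ, M f (T (MemLp.toLp (fun x => (ψ j x : ℂ) * s x) (hsL2 j))) := by
  intro h f hf_meas hf_bdd hf_sbdd hf_sne
  obtain ⟨x₀, hx₀⟩ := hf_sne
  obtain ⟨R, hR⟩ := hf_sbdd.subset_closedBall x₀
  have hR0 : 0 ≤ R := by
    have := hR hx₀
    simpa using Metric.mem_closedBall.mp this
  set S : Set X := support f with hS
  -- the cutoff region
  set N : Set X := {x | EMetric.infEdist x S ≤ ENNReal.ofReal (r + 1)} with hN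
  have hN_closed : IsClosed N :=
    isClosed_le EMetric.continuous_infEdist continuous_const
  set χ : X → ℂ := N.indicator 1 with hχ
  have hχ_meas : Measurable χ := measurable_const.indicator hN_closed.measurableSet
  have hχ_bdd : ∃ C, ∀ x, ‖χ x‖ ≤ C := by
    refine ⟨1, fun x => ?_⟩
    by_cases hx : x ∈ N <;> simp [hχ, Set.indicator, hx]
  have hχ_one : ∀ x ∈ N, χ x = 1 := fun x hx => by simp [hχ, Set.indicator, hx]
  have hχ_zero : ∀ x, x ∉ N → χ x = 0 := fun x hx => by simp [hχ, Set.indicator, hx]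
  -- the splitting lemma : M f (T u) = M f (T (M χ u))
  have hsplit : ∀ u : Lp ℂ 2 μ, M f (T u) = M f (T (M χ u)) := by
    intro u
    set χ' : X → ℂ := fun x => 1 - χ x with hχ'
    have hχ'_meas : Measurable χ' := measurable_const.sub hχ_meas
    have hχ'_bdd : ∃ C, ∀ x, ‖χ' x‖ ≤ C := by
      obtain ⟨C, hC⟩ := hχ_bdd
      exact ⟨1 + C, fun x => (norm_sub_le _ _).trans (by simpa using add_le_add_left (hC x) 1)⟩
    have h0 : (M f).comp (T.comp (M χ')) = 0 := by
      apply hT_prop f χ' hf_meas hχ'_meas hf_bdd hχ'_bdd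
      have hlt : ENNReal.ofReal r < ENNReal.ofReal (r + 1) := by
        rw [ENNReal.ofReal_lt_ofReal_iff (by linarith)]; linarith
      refine lt_of_lt_of_le hlt ?_
      refine le_iInf₂ fun x hx => le_iInf₂ fun y hy => ?_
      have hyN : y ∉ N := by
        intro hyN
        exact hy (by simp [hχ', hχ_one y hyN])
      have h1 : ENNReal.ofReal (r + 1) < EMetric.infEdist y S := lt_of_not_ge (by simpa [hN] using hyN)
      calc ENNReal.ofReal (r + 1) ≤ EMetric.infEdist y S := h1.le
        _ ≤ edist y x := EMetric.infEdist_le_edist_of_mem hx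
        _ = edist x y := edist_comm y x
    have hdecomp : u = M χ u + M χ' u := by
      apply Lp.ext
      have h1 := hM χ hχ_meas hχ_bdd u
      have h2 := hM χ' hχ'_meas hχ'_bdd u
      filter_upwards [h1, h2, Lp.coeFn_add (M χ u) (M χ' u)] with x e1 e2 e3
      rw [e3]; simp only [Pi.add_apply, e1, e2]; simp only [hχ']; ring
    have hz : M f (T (M χ' u)) = 0 := by
      have := congrFun (congrArg DFunLike.coe h0) u
      simpa using this
    calc M f (T u) = M f (T (M χ u + M χ' u)) := by rw [← hdecomp]
      _ = M f (T (M χ u)) + M f (T (M χ' u)) := by rw [map_add, map_add]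
      _ = M f (T (M χ u)) := by rw [hz, add_zero]
  -- the key lemma for an arbitrary partition family
  have key : ∀ (φ : ℕ → X → ℝ) (v : ℕ → Lp ℂ 2 μ),
      (∀ j, Measurable (φ j)) →
      (∀ x, HasSum (fun j => φ j x) 1) →
      (∀ (j : ℕ) (ρ : ℝ), 0 < ρ →
        {k : ℕ | (⨅ x ∈ support (φ j), ⨅ y ∈ support (φ k), edist x y) ≤
          ENNReal.ofReal ρ}.Finite) →
      (∀ j, (v j : X → ℂ) =ᵐ[μ] fun x => (φ j x : ℂ) * s x) →
      {j : ℕ | M f (T (v j)) ≠ 0}.Finite ∧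
      ∀ w : Lp ℂ 2 μ, ((w : X → ℂ) =ᵐ[μ] fun x => χ x * s x) →
        ∑ᶠ j : ℕ, M f (T (v j)) = M f (T w) := by
    intro φ v hφ_meas hφ_sum hφ_fin hv
    -- anchor index
    have hj₀ : ∃ j₀, x₀ ∈ support (φ j₀) := by
      by_contra hcon
      push_neg at hcon
      have : ∀ j, φ j x₀ = 0 := fun j => by
        have := hcon j; simpa [Function.mem_support] using this
      have h1 : HasSum (fun j => φ j x₀) 0 := by
        simpa [this] using hasSum_zero (α := ℝ) (β := ℕ)
      exact one_ne_zero (h1.unique (hφ_sum x₀)).symm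
    obtain ⟨j₀, hj₀⟩ := hj₀
    -- finiteness of the interacting set
    have hJfin : {j : ℕ | (support (φ j) ∩ N).Nonempty}.Finite := by
      refine (hφ_fin j₀ (R + r + 2) (by linarith)).subset ?_
      rintro k ⟨y, hyk, hyN⟩
      have h1 : EMetric.infEdist y S < ENNReal.ofReal (r + 2) := by
        refine lt_of_le_of_lt hyN ?_
        rw [ENNReal.ofReal_lt_ofReal_iff (by linarith)]; linarith
      obtain ⟨x, hxS, hxy⟩ := EMetric.infEdist_lt_iff.mp h1
      have hx₀x : edist x₀ x ≤ ENNReal.ofReal R := by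
        have := hR hxS
        rw [edist_dist]
        exact ENNReal.ofReal_le_ofReal (by rw [dist_comm]; exact Metric.mem_closedBall.mp this)
      have : edist x₀ y ≤ ENNReal.ofReal (R + r + 2) := by
        calc edist x₀ y ≤ edist x₀ x + edist x y := edist_triangle _ _ _
          _ = edist x₀ x + edist y x := by rw [edist_comm x y]
          _ ≤ ENNReal.ofReal R + ENNReal.ofReal (r + 2) := add_le_add hx₀x hxy.le
          _ = ENNReal.ofReal (R + (r + 2)) := (ENNReal.ofReal_add hR0 (by linarith)).symm
          _ = ENNReal.ofReal (R + r + 2) := by ring_nf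
      exact le_trans (iInf₂_le_of_le x₀ hj₀ (iInf₂_le_of_le y hyk le_rfl)) this
    -- terms with no interaction vanish
    have hMχv : ∀ j, (support (φ j) ∩ N) = ∅ → M χ (v j) = 0 := by
      intro j hj
      apply Lp.ext
      refine ((hM χ hχ_meas hχ_bdd (v j)).trans ?_).trans (Lp.coeFn_zero ℂ 2 μ).symm
      filter_upwards [hv j] with x hx
      rw [hx]
      by_cases hxN : x ∈ N
      · have hxφ : φ j x = 0 := by
          by_contra hcon
          exact Set.eq_empty_iff_forall_notMem.mp hj x ⟨hcon, hxN⟩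
        simp [hxφ]
      · simp [hχ_zero x hxN]
    have hzero : ∀ j, (support (φ j) ∩ N) = ∅ → M f (T (v j)) = 0 := by
      intro j hj
      rw [hsplit, hMχv j hj, map_zero, map_zero]
    have hsubset : {j : ℕ | M f (T (v j)) ≠ 0} ⊆ {j : ℕ | (support (φ j) ∩ N).Nonempty} := by
      intro j hj
      by_contra hcon
      exact hj (hzero j (Set.not_nonempty_iff_eq_empty.mp hcon))
    refine ⟨hJfin.subset hsubset, ?_⟩
    intro w hw
    set J : Finset ℕ := hJfin.toFinset with hJ
    have hsupp_sub : support (fun j => M f (T (v j))) ⊆ (J : Set ℕ) := by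
      intro j hj
      rw [hJ]
      simpa using hsubset hj
    rw [finsum_eq_sum_of_support_subset _ hsupp_sub]
    have hterm : ∀ j ∈ J, M f (T (v j)) = M f (T (M χ (v j))) := fun j _ => hsplit (v j)
    rw [Finset.sum_congr rfl hterm, ← map_sum, ← map_sum]
    congr 1
    -- ∑ j in J, M χ (v j) = w
    have hsum_eq : (∑ j ∈ J, M χ (v j)) = w := by
      apply Lp.ext
      refine (lp_coeFn_sum_aux J (fun j => M χ (v j))).trans ?_
      have hall : ∀ᵐ x ∂μ, ∀ j : ℕ, (M χ (v j) : X → ℂ) x = χ x * ((φ j x : ℂ) * s x) := by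
        rw [MeasureTheory.ae_all_iff]
        intro j
        filter_upwards [hM χ hχ_meas hχ_bdd (v j), hv j] with x h1 h2
        rw [h1, h2]
      filter_upwards [hall, hw] with x hx hwx
      rw [hwx]
      rw [Finset.sum_congr rfl (fun j _ => hx j)]
      by_cases hxN : x ∈ N
      · have hJsum : ∑ j ∈ J, φ j x = 1 := by
          refine (hasSum_sum_of_ne_finset_zero ?_).unique (hφ_sum x)
          intro j hj
          by_contra hcon
          have : j ∈ {j : ℕ | (support (φ j) ∩ N).Nonempty} := ⟨x, hcon, hxN⟩
          exact hj (by rwa [hJ, Set.Finite.mem_toFinset])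
        have : ∑ j ∈ J, ((φ j x : ℂ)) = 1 := by
          rw [← Complex.ofReal_sum, hJsum, Complex.ofReal_one]
        calc ∑ j ∈ J, χ x * ((φ j x : ℂ) * s x) = (∑ j ∈ J, (φ j x : ℂ)) * (χ x * s x) := by
              rw [Finset.sum_mul]
              exact Finset.sum_congr rfl fun j _ => by ring
          _ = χ x * s x := by rw [this, one_mul]
      · simp [hχ_zero x hxN]
    rw [hsum_eq]
  -- construct W = χ·s in L²
  have hWmem : MemLp (fun x => χ x * s x) 2 μ := by
    -- first the interacting set for ψ
    have hj₀ : ∃ j₀, x₀ ∈ support (ψ j₀) := by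
      by_contra hcon
      push_neg at hcon
      have : ∀ j, ψ j x₀ = 0 := fun j => by
        have := hcon j; simpa [Function.mem_support] using this
      have h1 : HasSum (fun j => ψ j x₀) 0 := by
        simpa [this] using hasSum_zero (α := ℝ) (β := ℕ)
      exact one_ne_zero (h1.unique (hψ_sum x₀)).symm
    obtain ⟨j₀, hj₀⟩ := hj₀
    have hJfin : {j : ℕ | (support (ψ j) ∩ N).Nonempty}.Finite := by
      refine (hψ_fin j₀ (R + r + 2) (by linarith)).subset ?_
      rintro k ⟨y, hyk, hyN⟩
      have h1 : EMetric.infEdist y S < ENNReal.ofReal (r + 2) := by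
        refine lt_of_le_of_lt hyN ?_
        rw [ENNReal.ofReal_lt_ofReal_iff (by linarith)]; linarith
      obtain ⟨x, hxS, hxy⟩ := EMetric.infEdist_lt_iff.mp h1
      have hx₀x : edist x₀ x ≤ ENNReal.ofReal R := by
        have := hR hxS
        rw [edist_dist]
        exact ENNReal.ofReal_le_ofReal (by rw [dist_comm]; exact Metric.mem_closedBall.mp this)
      have : edist x₀ y ≤ ENNReal.ofReal (R + r + 2) := by
        calc edist x₀ y ≤ edist x₀ x + edist x y := edist_triangle _ _ _
          _ = edist x₀ x + edist y x := by rw [edist_comm x y]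
          _ ≤ ENNReal.ofReal R + ENNReal.ofReal (r + 2) := add_le_add hx₀x hxy.le
          _ = ENNReal.ofReal (R + (r + 2)) := (ENNReal.ofReal_add hR0 (by linarith)).symm
          _ = ENNReal.ofReal (R + r + 2) := by ring_nf
      exact le_trans (iInf₂_le_of_le x₀ hj₀ (iInf₂_le_of_le y hyk le_rfl)) this
    set J : Finset ℕ := hJfin.toFinset with hJ
    have heq : (fun x => χ x * s x) = fun x => ∑ j ∈ J, χ x * ((ψ j x : ℂ) * s x) := by
      funext x
      by_cases hxN : x ∈ N
      · have hJsum : ∑ j ∈ J, ψ j x = 1 := by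
          refine (hasSum_sum_of_ne_finset_zero ?_).unique (hψ_sum x)
          intro j hj
          by_contra hcon
          have : j ∈ {j : ℕ | (support (ψ j) ∩ N).Nonempty} := ⟨x, hcon, hxN⟩
          exact hj (by rwa [hJ, Set.Finite.mem_toFinset])
        have hC : ∑ j ∈ J, ((ψ j x : ℂ)) = 1 := by
          rw [← Complex.ofReal_sum, hJsum, Complex.ofReal_one]
        calc χ x * s x = (∑ j ∈ J, (ψ j x : ℂ)) * (χ x * s x) := by rw [hC, one_mul]
          _ = ∑ j ∈ J, χ x * ((ψ j x : ℂ) * s x) := by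
              rw [Finset.sum_mul]
              exact Finset.sum_congr rfl fun j _ => by ring
      · simp [hχ_zero x hxN]
    rw [heq]
    refine memLp_finsetSum J fun j _ => ?_
    refine (hsL2 j).of_le ?_ ?_
    · exact (hχ_meas.mul ((Complex.measurable_ofReal.comp (hψ_cont j).measurable).mul hs_meas)).aestronglyMeasurable
    · refine Filter.Eventually.of_forall fun x => ?_
      rw [norm_mul]
      obtain ⟨C, hC⟩ := hχ_bdd
      calc ‖χ x‖ * ‖(ψ j x : ℂ) * s x‖ ≤ 1 * ‖(ψ j x : ℂ) * s x‖ := by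
            apply mul_le_mul_of_nonneg_right _ (norm_nonneg _)
            by_cases hx : x ∈ N <;> simp [hχ_one, hχ_zero, hx, hχ]
        _ = ‖(ψ j x : ℂ) * s x‖ := one_mul _
  set W : Lp ℂ 2 μ := hWmem.toLp _ with hW
  have hWae : (W : X → ℂ) =ᵐ[μ] fun x => χ x * s x := hWmem.coeFn_toLp
  -- the ψ family
  obtain ⟨fin2, sum2⟩ := key ψ (fun j => (hsL2 j).toLp _) (fun j => (hψ_cont j).measurable)
    hψ_sum hψ_fin (fun j => (hsL2 j).coeFn_toLp)
  -- the translated family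
  set φh : ℕ → X → ℝ := fun j x => ψ j (h⁻¹ • x) with hφh
  have hφh_meas : ∀ j, Measurable (φh j) :=
    fun j => ((hψ_cont j).comp (continuous_const_smul h⁻¹)).measurable
  have hφh_sum : ∀ x, HasSum (fun j => φh j x) 1 := fun x => hψ_sum (h⁻¹ • x)
  have hφh_supp : ∀ k, support (φh k) = (fun x => h • x) '' support (ψ k) := by
    intro k
    ext x
    constructor
    · intro hx
      exact ⟨h⁻¹ • x, hx, smul_inv_smul h x⟩
    · rintro ⟨y, hy, rfl⟩
      simpa [hφh, Function.mem_support, inv_smul_smul] using hy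
  have hedist_smul : ∀ (x y : X), edist (h • x) (h • y) = edist x y := by
    intro x y
    rw [edist_dist, edist_dist, hiso h]
  have hφh_inf : ∀ j k, (⨅ x ∈ support (φh j), ⨅ y ∈ support (φh k), edist x y) =
      ⨅ x ∈ support (ψ j), ⨅ y ∈ support (ψ k), edist x y := by
    intro j k
    rw [hφh_supp j, hφh_supp k, iInf_image]
    refine iInf_congr fun x => iInf_congr fun _ => ?_
    rw [iInf_image]
    exact iInf_congr fun y => iInf_congr fun _ => hedist_smul x y
  have hφh_fin : ∀ (j : ℕ) (ρ : ℝ), 0 < ρ →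
      {k : ℕ | (⨅ x ∈ support (φh j), ⨅ y ∈ support (φh k), edist x y) ≤
        ENNReal.ofReal ρ}.Finite := by
    intro j ρ hρ
    refine (hψ_fin j ρ hρ).subset fun k hk => ?_
    rwa [Set.mem_setOf_eq, hφh_inf j k] at hk
  have hUv : ∀ j, ((U h ((hsL2 j).toLp _) : Lp ℂ 2 μ) : X → ℂ) =ᵐ[μ]
      fun x => (φh j x : ℂ) * s x := by
    intro j
    refine (hU h ((hsL2 j).toLp _)).trans ?_
    have hmp : MeasurePreserving (fun x : X => h⁻¹ • x) μ μ := measurePreserving_smul h⁻¹ μ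
    have hcomp : (fun x : X => ((hsL2 j).toLp _ : X → ℂ) (h⁻¹ • x)) =ᵐ[μ]
        fun x => (ψ j (h⁻¹ • x) : ℂ) * s (h⁻¹ • x) :=
      hmp.quasiMeasurePreserving.ae_eq_comp ((hsL2 j).coeFn_toLp)
    refine hcomp.trans (Filter.Eventually.of_forall fun x => ?_)
    show (ψ j (h⁻¹ • x) : ℂ) * s (h⁻¹ • x) = (φh j x : ℂ) * s x
    rw [hs_inv h⁻¹ x]
  obtain ⟨fin1, sum1⟩ := key φh (fun j => U h ((hsL2 j).toLp _)) hφh_meas hφh_sum hφh_fin hUv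
  have hcomm : ∀ u : Lp ℂ 2 μ, U h (T u) = T (U h u) := by
    intro u
    have := congrFun (congrArg DFunLike.coe (hTU h)) u
    simpa using this
  refine ⟨?_, fin2, ?_⟩
  · refine fin1.subset fun j hj => ?_
    simpa [hcomm] using hj
  · calc ∑ᶠ j : ℕ, M f (U h (T ((hsL2 j).toLp _)))
        = ∑ᶠ j : ℕ, M f (T (U h ((hsL2 j).toLp _))) := by
          exact finsum_congr fun j => by rw [hcomm]
      _ = M f (T W) := sum1 W hWae
      _ = ∑ᶠ j : ℕ, M f (T ((hsL2 j).toLp _)) := (sum2 W hWae).symm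
end
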